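/- arXiv:2210.07389 — 4 statements merged into one kernel-verified Lean document; each statement's English description precedes it below -/
import Mathlib

section
/- The Artin map f̃_A is injective on each of the intervals J₁,…,J₈ and is Markov with respect to this partition, with image equalities: f̃_A(J₁) = J₁ ∪ J₂, f̃_A(J₂) = J₃ ∪ J₄, f̃_A(J₃) = J₇, f̃_A(J₄) = J₈, f̃_A(J₅) = J₁, f̃_A(J₆) = J₂, f̃_A(J₇) = J₅ ∪ J₆, f̃_A(J₈) = J₇ ∪ J₈. -/
/-- The compactified translation `T̃ = k ∘ T ∘ k⁻¹`, `T(x) = x + 1`, on `[-1,1)`. -/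
noncomputable def Ttilde (x : ℝ) : ℝ :=
  if x ≤ -1/2 then -2 - 1/x
  else if x ≤ 0 then (1 + 2*x) / (2 + 3*x)
  else 1 / (2 - x)

/-- The compactified inversion `S̃ = k ∘ S ∘ k⁻¹`, `S(x) = -1/x`, on `[-1,1)`. -/
noncomputable def Stilde (x : ℝ) : ℝ :=
  if x < 0 then x + 1 else if x = 0 then -1 else x - 1

/-- The compactified inverse translation `T̃⁻¹ = k ∘ T⁻¹ ∘ k⁻¹` on `[-1,1)`. -/
noncomputable def Tinvtilde (x : ℝ) : ℝ :=
  if x ≤ 0 then -1 / (2 + x)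
  else if x ≤ 1/2 then (1 - 2*x) / (3*x - 2)
  else 2 - 1/x

/-- The Artin map `f̃_A : [-1,1) → [-1,1)`. -/
noncomputable def fA (x : ℝ) : ℝ :=
  if x < -1/2 then Ttilde x
  else if x < 1/2 then Stilde x
  else Tinvtilde x

def J1 : Set ℝ := Set.Ico (-1) (-2/3)
def J2 : Set ℝ := Set.Ico (-2/3) (-1/2)
def J3 : Set ℝ := Set.Ico (-1/2) (-1/3)
def J4 : Set ℝ := Set.Ico (-1/3) 0
def J5 : Set ℝ := Set.Ico 0 (1/3)
def J6 : Set ℝ := Set.Ico (1/3) (1/2)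
def J7 : Set ℝ := Set.Ico (1/2) (2/3)
def J8 : Set ℝ := Set.Ico (2/3) 1

lemma fA_left {x : ℝ} (h : x < -1/2) : fA x = -2 - 1/x := by
  rw [fA, if_pos h, Ttilde, if_pos (by linarith)]

lemma fA_midneg {x : ℝ} (h1 : -1/2 ≤ x) (h2 : x < 0) : fA x = x + 1 := by
  rw [fA, if_neg (by linarith), if_pos (by linarith), Stilde, if_pos h2]

lemma fA_zero : fA 0 = -1 := by
  rw [fA, if_neg (by norm_num), if_pos (by norm_num), Stilde]
  norm_num

lemma fA_midpos {x : ℝ} (h1 : 0 < x) (h2 : x < 1/2) : fA x = x - 1 := by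
  rw [fA, if_neg (by linarith), if_pos h2, Stilde, if_neg (by linarith), if_neg h1.ne']

lemma fA_half : fA (1/2) = 0 := by
  rw [fA, if_neg (by norm_num), if_neg (by norm_num), Tinvtilde,
    if_neg (by norm_num), if_pos le_rfl]
  norm_num

lemma fA_right {x : ℝ} (h : 1/2 < x) : fA x = 2 - 1/x := by
  rw [fA, if_neg (by linarith), if_neg (by linarith), Tinvtilde,
    if_neg (by linarith), if_neg (by linarith)]

/-- The Artin map is injective on each element of the Markov partition `J₁,…,J₈` and
satisfies the Markov image equalities of the Artin transition diagram. -/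
theorem artin_markov :
    Set.InjOn fA J1 ∧ Set.InjOn fA J2 ∧ Set.InjOn fA J3 ∧ Set.InjOn fA J4 ∧
    Set.InjOn fA J5 ∧ Set.InjOn fA J6 ∧ Set.InjOn fA J7 ∧ Set.InjOn fA J8 ∧
    fA '' J1 = J1 ∪ J2 ∧ fA '' J2 = J3 ∪ J4 ∧ fA '' J3 = J7 ∧ fA '' J4 = J8 ∧
    fA '' J5 = J1 ∧ fA '' J6 = J2 ∧ fA '' J7 = J5 ∪ J6 ∧ fA '' J8 = J7 ∪ J8 := by
  have hJ12 : J1 ∪ J2 = Set.Ico (-1 : ℝ) (-1/2) := by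
    rw [J1, J2, Set.Ico_union_Ico_eq_Ico] <;> norm_num
  have hJ34 : J3 ∪ J4 = Set.Ico (-1/2 : ℝ) 0 := by
    rw [J3, J4, Set.Ico_union_Ico_eq_Ico] <;> norm_num
  have hJ56 : J5 ∪ J6 = Set.Ico (0 : ℝ) (1/2) := by
    rw [J5, J6, Set.Ico_union_Ico_eq_Ico] <;> norm_num
  have hJ78 : J7 ∪ J8 = Set.Ico (1/2 : ℝ) 1 := by
    rw [J7, J8, Set.Ico_union_Ico_eq_Ico] <;> norm_num
  refine ⟨?_, ?_, ?_, ?_, ?_, ?_, ?_, ?_, ?_, ?_, ?_, ?_, ?_, ?_, ?_, ?_⟩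
  -- InjOn J1
  · rintro a ⟨ha1, ha2⟩ b ⟨hb1, hb2⟩ h
    rw [fA_left (by linarith), fA_left (by linarith)] at h
    have ha : a ≠ 0 := by intro h'; rw [h'] at ha2; norm_num at ha2
    have hb : b ≠ 0 := by intro h'; rw [h'] at hb2; norm_num at hb2
    field_simp at h
    linarith
  -- InjOn J2
  · rintro a ⟨ha1, ha2⟩ b ⟨hb1, hb2⟩ h
    rw [fA_left (by linarith), fA_left (by linarith)] at h
    have ha : a ≠ 0 := by intro h'; rw [h'] at ha2; norm_num at ha2
    have hb : b ≠ 0 := by intro h'; rw [h'] at hb2; norm_num at hb2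
    field_simp at h
    linarith
  -- InjOn J3
  · rintro a ⟨ha1, ha2⟩ b ⟨hb1, hb2⟩ h
    rw [fA_midneg (by linarith) (by linarith),
        fA_midneg (by linarith) (by linarith)] at h
    linarith
  -- InjOn J4
  · rintro a ⟨ha1, ha2⟩ b ⟨hb1, hb2⟩ h
    rw [fA_midneg (by linarith) (by linarith),
        fA_midneg (by linarith) (by linarith)] at h
    linarith
  -- InjOn J5
  · rintro a ⟨ha1, ha2⟩ b ⟨hb1, hb2⟩ h
    rcases eq_or_lt_of_le ha1 with ha0 | ha0 <;>
      rcases eq_or_lt_of_le hb1 with hb0 | hb0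
    · rw [← ha0, ← hb0]
    · rw [← ha0, fA_zero, fA_midpos hb0 (by linarith)] at h; linarith
    · rw [← hb0, fA_zero, fA_midpos ha0 (by linarith)] at h; linarith
    · rw [fA_midpos ha0 (by linarith), fA_midpos hb0 (by linarith)] at h; linarith
  -- InjOn J6
  · rintro a ⟨ha1, ha2⟩ b ⟨hb1, hb2⟩ h
    rw [fA_midpos (by linarith) (by linarith),
        fA_midpos (by linarith) (by linarith)] at h
    linarith
  -- InjOn J7
  · rintro a ⟨ha1, ha2⟩ b ⟨hb1, hb2⟩ h
    rcases eq_or_lt_of_le ha1 with ha0 | ha0 <;>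
      rcases eq_or_lt_of_le hb1 with hb0 | hb0
    · rw [← ha0, ← hb0]
    · exfalso
      rw [← ha0, fA_half, fA_right hb0] at h
      have hb : b ≠ 0 := by positivity
      field_simp at h
      linarith
    · exfalso
      rw [← hb0, fA_half, fA_right ha0] at h
      have ha : a ≠ 0 := by positivity
      field_simp at h
      linarith
    · rw [fA_right ha0, fA_right hb0] at h
      have ha : a ≠ 0 := by positivity
      have hb : b ≠ 0 := by positivity
      field_simp at h
      linarith
  -- InjOn J8
  · rintro a ⟨ha1, ha2⟩ b ⟨hb1, hb2⟩ h
    rw [fA_right (by linarith), fA_right (by linarith)] at h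
    have ha : a ≠ 0 := by positivity
    have hb : b ≠ 0 := by positivity
    field_simp at h
    linarith
  -- image J1 = J1 ∪ J2
  · rw [hJ12]
    ext y
    constructor
    · rintro ⟨x, ⟨hx1, hx2⟩, rfl⟩
      rw [fA_left (by linarith)]
      have hx0 : x < 0 := by linarith
      constructor
      · have : 1/x ≤ -1 := by rw [div_le_iff_of_neg hx0]; linarith
        linarith
      · have : (-3:ℝ)/2 < 1/x := by rw [lt_div_iff_of_neg hx0]; linarith
        linarith
    · rintro ⟨hy1, hy2⟩
      have hd : (0:ℝ) < 2 + y := by linarith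
      have hlt : -1/(2+y) < -1/2 := by
        rw [neg_div, show (-1/2 : ℝ) = -(1/2) by norm_num, neg_lt_neg_iff, lt_div_iff₀ hd]
        linarith
      refine ⟨-1/(2+y), ⟨?_, ?_⟩, ?_⟩
      · rw [neg_div, neg_le_neg_iff, div_le_one hd]; linarith
      · rw [neg_div, show (-2/3 : ℝ) = -(2/3) by norm_num, neg_lt_neg_iff, lt_div_iff₀ hd]
        linarith
      · rw [fA_left hlt]
        field_simp
        ring
  -- image J2 = J3 ∪ J4
  · rw [hJ34]
    ext y
    constructor
    · rintro ⟨x, ⟨hx1, hx2⟩, rfl⟩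
      rw [fA_left (by linarith)]
      have hx0 : x < 0 := by linarith
      constructor
      · have : 1/x ≤ -3/2 := by rw [div_le_iff_of_neg hx0]; linarith
        linarith
      · have : (-2:ℝ) < 1/x := by rw [lt_div_iff_of_neg hx0]; linarith
        linarith
    · rintro ⟨hy1, hy2⟩
      have hd : (0:ℝ) < 2 + y := by linarith
      have hlt : -1/(2+y) < -1/2 := by
        rw [neg_div, show (-1/2 : ℝ) = -(1/2) by norm_num, neg_lt_neg_iff, lt_div_iff₀ hd]
        linarith
      refine ⟨-1/(2+y), ⟨?_, hlt⟩, ?_⟩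
      · rw [show (-2/3 : ℝ) = -(2/3) by norm_num, neg_div, neg_le_neg_iff, div_le_iff₀ hd]
        linarith
      · rw [fA_left hlt]
        field_simp
        ring
  -- image J3 = J7
  · ext y
    constructor
    · rintro ⟨x, ⟨hx1, hx2⟩, rfl⟩
      rw [fA_midneg (by linarith) (by linarith)]
      exact ⟨by linarith, by linarith⟩
    · rintro ⟨hy1, hy2⟩
      exact ⟨y - 1, ⟨by linarith, by linarith⟩,
        by rw [fA_midneg (by linarith) (by linarith)]; ring⟩
  -- image J4 = J8
  · ext y
    constructor
    · rintro ⟨x, ⟨hx1, hx2⟩, rfl⟩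
      rw [fA_midneg (by linarith) (by linarith)]
      exact ⟨by linarith, by linarith⟩
    · rintro ⟨hy1, hy2⟩
      exact ⟨y - 1, ⟨by linarith, by linarith⟩,
        by rw [fA_midneg (by linarith) (by linarith)]; ring⟩
  -- image J5 = J1
  · ext y
    constructor
    · rintro ⟨x, ⟨hx1, hx2⟩, rfl⟩
      rcases eq_or_lt_of_le hx1 with hx0 | hx0
      · rw [← hx0, fA_zero]; exact ⟨by norm_num, by norm_num⟩
      · rw [fA_midpos hx0 (by linarith)]
        exact ⟨by linarith, by linarith⟩
    · rintro ⟨hy1, hy2⟩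
      rcases eq_or_lt_of_le hy1 with hy0 | hy0
      · exact ⟨0, ⟨le_refl 0, by norm_num⟩, by rw [fA_zero, hy0]⟩
      · exact ⟨y + 1, ⟨by linarith, by linarith⟩,
          by rw [fA_midpos (by linarith) (by linarith)]; ring⟩
  -- image J6 = J2
  · ext y
    constructor
    · rintro ⟨x, ⟨hx1, hx2⟩, rfl⟩
      rw [fA_midpos (by linarith) (by linarith)]
      exact ⟨by linarith, by linarith⟩
    · rintro ⟨hy1, hy2⟩
      exact ⟨y + 1, ⟨by linarith, by linarith⟩,
        by rw [fA_midpos (by linarith) (by linarith)]; ring⟩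
  -- image J7 = J5 ∪ J6
  · rw [hJ56]
    ext y
    constructor
    · rintro ⟨x, ⟨hx1, hx2⟩, rfl⟩
      rcases eq_or_lt_of_le hx1 with hx0 | hx0
      · rw [← hx0, fA_half]; exact ⟨le_refl 0, by norm_num⟩
      · rw [fA_right hx0]
        have hx : (0:ℝ) < x := by linarith
        constructor
        · have : 1/x ≤ 2 := by rw [div_le_iff₀ hx]; linarith
          linarith
        · have : (3:ℝ)/2 < 1/x := by rw [lt_div_iff₀ hx]; linarith
          linarith
    · rintro ⟨hy1, hy2⟩
      rcases eq_or_lt_of_le hy1 with hy0 | hy0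
      · exact ⟨1/2, ⟨le_refl _, by norm_num⟩, by rw [fA_half, hy0]⟩
      · have hd : (0:ℝ) < 2 - y := by linarith
        have hgt : (1:ℝ)/2 < 1/(2-y) := by rw [lt_div_iff₀ hd]; linarith
        refine ⟨1/(2-y), ⟨le_of_lt hgt, ?_⟩, ?_⟩
        · rw [div_lt_iff₀ hd]; linarith
        · rw [fA_right hgt]
          field_simp
          ring
  -- image J8 = J7 ∪ J8
  · rw [hJ78]
    ext y
    constructor
    · rintro ⟨x, ⟨hx1, hx2⟩, rfl⟩
      rw [fA_right (by linarith)]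
      have hx : (0:ℝ) < x := by linarith
      constructor
      · have : 1/x ≤ 3/2 := by rw [div_le_iff₀ hx]; linarith
        linarith
      · have : (1:ℝ) < 1/x := by rw [lt_div_iff₀ hx]; linarith
        linarith
    · rintro ⟨hy1, hy2⟩
      have hd : (0:ℝ) < 2 - y := by linarith
      have hge : (2:ℝ)/3 ≤ 1/(2-y) := by rw [le_div_iff₀ hd]; linarith
      refine ⟨1/(2-y), ⟨hge, ?_⟩, ?_⟩
      · rw [div_lt_one hd]; linarith
      · rw [fA_right (by linarith)]
        field_simp
        ring
end

section
/- The Hurwitz map f̃_H is injective on each of the intervals J₁,…,J₈ and is Markov with respect to this partition, with image equalities: f̃_H(J₁) = J₁ ∪ J₂, f̃_H(J₂) = J₃ ∪ J₄, f̃_H(J₃) = J₅, f̃_H(J₄) = J₈, f̃_H(J₅) = J₁, f̃_H(J₆) = J₄, f̃_H(J₇) = J₅ ∪ J₆, f̃_H(J₈) = J₇ ∪ J₈. -/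
/-- The Hurwitz map `f̃_H : [-1,1) → [-1,1)`. -/
noncomputable def fH (x : ℝ) : ℝ :=
  if x < -1/3 then Ttilde x
  else if x < 1/3 then Stilde x
  else Tinvtilde x

lemma fH_eq12 {x : ℝ} (h1 : -1 ≤ x) (h2 : x < -1/2) : fH x = -2 - 1/x := by
  unfold fH Ttilde
  rw [if_pos (by linarith), if_pos (by linarith)]

lemma fH_eq3 {x : ℝ} (h1 : -1/2 ≤ x) (h2 : x < -1/3) : fH x = (1 + 2*x) / (2 + 3*x) := by
  rcases eq_or_lt_of_le h1 with he | hl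
  · rw [← he]; norm_num [fH, Ttilde]
  · unfold fH Ttilde
    rw [if_pos (by linarith), if_neg (by linarith), if_pos (by linarith)]

lemma fH_eq4 {x : ℝ} (h1 : -1/3 ≤ x) (h2 : x < 0) : fH x = x + 1 := by
  unfold fH Stilde
  rw [if_neg (by linarith), if_pos (by linarith), if_pos h2]

lemma fH_eq5 {x : ℝ} (h1 : 0 ≤ x) (h2 : x < 1/3) :
    fH x = if x = 0 then -1 else x - 1 := by
  unfold fH Stilde
  rw [if_neg (by linarith), if_pos (by linarith), if_neg (by linarith)]

lemma fH_eq6 {x : ℝ} (h1 : 1/3 ≤ x) (h2 : x < 1/2) : fH x = (1 - 2*x) / (3*x - 2) := by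
  unfold fH Tinvtilde
  rw [if_neg (by linarith), if_neg (by linarith), if_neg (by linarith), if_pos (by linarith)]

lemma fH_eq78 {x : ℝ} (h1 : 1/2 ≤ x) (h2 : x < 1) : fH x = 2 - 1/x := by
  rcases eq_or_lt_of_le h1 with he | hl
  · rw [← he]; norm_num [fH, Tinvtilde]
  · unfold fH Tinvtilde
    rw [if_neg (by linarith), if_neg (by linarith), if_neg (by linarith),
      if_neg (by linarith)]

/-- The Hurwitz map is injective on each element of the Markov partition `J₁,…,J₈` and
satisfies the Markov image equalities of the Hurwitz transition diagram. -/
theorem hurwitz_markov :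
    Set.InjOn fH J1 ∧ Set.InjOn fH J2 ∧ Set.InjOn fH J3 ∧ Set.InjOn fH J4 ∧
    Set.InjOn fH J5 ∧ Set.InjOn fH J6 ∧ Set.InjOn fH J7 ∧ Set.InjOn fH J8 ∧
    fH '' J1 = J1 ∪ J2 ∧ fH '' J2 = J3 ∪ J4 ∧ fH '' J3 = J5 ∧ fH '' J4 = J8 ∧
    fH '' J5 = J1 ∧ fH '' J6 = J4 ∧ fH '' J7 = J5 ∪ J6 ∧ fH '' J8 = J7 ∪ J8 := by
  refine ⟨?_, ?_, ?_, ?_, ?_, ?_, ?_, ?_, ?_, ?_, ?_, ?_, ?_, ?_, ?_, ?_⟩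
  · -- inj J1
    rintro a ⟨ha1, ha2⟩ b ⟨hb1, hb2⟩ h
    rw [fH_eq12 ha1 (by linarith), fH_eq12 hb1 (by linarith)] at h
    have hane : a ≠ 0 := by intro h'; rw [h'] at ha2; norm_num at ha2
    have hbne : b ≠ 0 := by intro h'; rw [h'] at hb2; norm_num at hb2
    field_simp at h; linarith
  · -- inj J2
    rintro a ⟨ha1, ha2⟩ b ⟨hb1, hb2⟩ h
    rw [fH_eq12 (by linarith) ha2, fH_eq12 (by linarith) hb2] at h
    have hane : a ≠ 0 := by intro h'; rw [h'] at ha2; norm_num at ha2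
    have hbne : b ≠ 0 := by intro h'; rw [h'] at hb2; norm_num at hb2
    field_simp at h; linarith
  · -- inj J3
    rintro a ⟨ha1, ha2⟩ b ⟨hb1, hb2⟩ h
    rw [fH_eq3 ha1 ha2, fH_eq3 hb1 hb2] at h
    have hane : (2 + 3*a) ≠ 0 := by intro h'; nlinarith
    have hbne : (2 + 3*b) ≠ 0 := by intro h'; nlinarith
    rw [div_eq_div_iff hane hbne] at h; nlinarith [h]
  · -- inj J4
    rintro a ⟨ha1, ha2⟩ b ⟨hb1, hb2⟩ h
    rw [fH_eq4 ha1 ha2, fH_eq4 hb1 hb2] at h; linarith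
  · -- inj J5
    rintro a ⟨ha1, ha2⟩ b ⟨hb1, hb2⟩ h
    rw [fH_eq5 ha1 ha2, fH_eq5 hb1 hb2] at h
    by_cases hA : a = 0
    · by_cases hB : b = 0
      · rw [hA, hB]
      · rw [if_pos hA, if_neg hB] at h
        exfalso; apply hB
        rcases eq_or_lt_of_le hb1 with he | hl
        · exact he.symm
        · linarith
    · by_cases hB : b = 0
      · rw [if_neg hA, if_pos hB] at h
        exfalso; apply hA
        rcases eq_or_lt_of_le ha1 with he | hl
        · exact he.symm
        · linarith
      · rw [if_neg hA, if_neg hB] at h; linarith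
  · -- inj J6
    rintro a ⟨ha1, ha2⟩ b ⟨hb1, hb2⟩ h
    rw [fH_eq6 ha1 ha2, fH_eq6 hb1 hb2] at h
    have hane : (3*a - 2) ≠ 0 := by intro h'; nlinarith
    have hbne : (3*b - 2) ≠ 0 := by intro h'; nlinarith
    rw [div_eq_div_iff hane hbne] at h; nlinarith [h]
  · -- inj J7
    rintro a ⟨ha1, ha2⟩ b ⟨hb1, hb2⟩ h
    rw [fH_eq78 ha1 (by linarith), fH_eq78 hb1 (by linarith)] at h
    have hane : a ≠ 0 := by intro h'; rw [h'] at ha1; norm_num at ha1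
    have hbne : b ≠ 0 := by intro h'; rw [h'] at hb1; norm_num at hb1
    field_simp at h; linarith
  · -- inj J8
    rintro a ⟨ha1, ha2⟩ b ⟨hb1, hb2⟩ h
    rw [fH_eq78 (by linarith) ha2, fH_eq78 (by linarith) hb2] at h
    have hane : a ≠ 0 := by intro h'; rw [h'] at ha1; norm_num at ha1
    have hbne : b ≠ 0 := by intro h'; rw [h'] at hb1; norm_num at hb1
    field_simp at h; linarith
  · -- image J1 = J1 ∪ J2
    have hU : J1 ∪ J2 = Set.Ico (-1 : ℝ) (-1/2) := by
      rw [J1, J2]; exact Set.Ico_union_Ico_eq_Ico (by norm_num) (by norm_num)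
    rw [hU]
    ext y
    simp only [Set.mem_image, J1, Set.mem_Ico]
    constructor
    · rintro ⟨x, ⟨h1, h2⟩, rfl⟩
      rw [fH_eq12 h1 (by linarith)]
      have hx : x < 0 := by linarith
      have hA : 1/x ≤ -1 := by rw [div_le_iff_of_neg hx]; linarith
      have hB : -3/2 < 1/x := by rw [lt_div_iff_of_neg hx]; linarith
      exact ⟨by linarith, by linarith⟩
    · rintro ⟨h1, h2⟩
      have hd : (0:ℝ) < 2 + y := by linarith
      have hx1 : -1 ≤ (-1)/(2+y) := by rw [le_div_iff₀ hd]; linarith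
      have hx2 : (-1)/(2+y) < -2/3 := by rw [div_lt_iff₀ hd]; linarith
      refine ⟨(-1)/(2+y), ⟨hx1, hx2⟩, ?_⟩
      rw [fH_eq12 hx1 (by linarith), one_div_div]
      ring
  · -- image J2 = J3 ∪ J4
    have hU : J3 ∪ J4 = Set.Ico (-1/2 : ℝ) 0 := by
      rw [J3, J4]; exact Set.Ico_union_Ico_eq_Ico (by norm_num) (by norm_num)
    rw [hU]
    ext y
    simp only [Set.mem_image, J2, Set.mem_Ico]
    constructor
    · rintro ⟨x, ⟨h1, h2⟩, rfl⟩
      rw [fH_eq12 (by linarith) h2]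
      have hx : x < 0 := by linarith
      have hA : 1/x ≤ -3/2 := by rw [div_le_iff_of_neg hx]; linarith
      have hB : -2 < 1/x := by rw [lt_div_iff_of_neg hx]; linarith
      exact ⟨by linarith, by linarith⟩
    · rintro ⟨h1, h2⟩
      have hd : (0:ℝ) < 2 + y := by linarith
      have hx1 : -2/3 ≤ (-1)/(2+y) := by rw [le_div_iff₀ hd]; linarith
      have hx2 : (-1)/(2+y) < -1/2 := by rw [div_lt_iff₀ hd]; linarith
      refine ⟨(-1)/(2+y), ⟨hx1, hx2⟩, ?_⟩
      rw [fH_eq12 (by linarith) hx2, one_div_div]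
      ring
  · -- image J3 = J5
    ext y
    simp only [Set.mem_image, J3, J5, Set.mem_Ico]
    constructor
    · rintro ⟨x, ⟨h1, h2⟩, rfl⟩
      rw [fH_eq3 h1 h2]
      have hd : (0:ℝ) < 2 + 3*x := by linarith
      refine ⟨div_nonneg (by linarith) hd.le, ?_⟩
      rw [div_lt_iff₀ hd]; linarith
    · rintro ⟨h1, h2⟩
      have hd : 3*y - 2 < 0 := by linarith
      have hx1 : -1/2 ≤ (1-2*y)/(3*y-2) := by rw [le_div_iff_of_neg hd]; linarith
      have hx2 : (1-2*y)/(3*y-2) < -1/3 := by rw [div_lt_iff_of_neg hd]; linarith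
      refine ⟨(1-2*y)/(3*y-2), ⟨hx1, hx2⟩, ?_⟩
      have hdne : 3*y - 2 ≠ 0 := ne_of_lt hd
      have hden : 2 + 3*((1-2*y)/(3*y-2)) ≠ 0 := by
        intro h'; linarith
      rw [fH_eq3 hx1 hx2, div_eq_iff hden]
      have hq := div_mul_cancel₀ (1-2*y) hdne
      linear_combination -hq
  · -- image J4 = J8
    ext y
    simp only [Set.mem_image, J4, J8, Set.mem_Ico]
    constructor
    · rintro ⟨x, ⟨h1, h2⟩, rfl⟩
      rw [fH_eq4 h1 h2]
      exact ⟨by linarith, by linarith⟩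
    · rintro ⟨h1, h2⟩
      refine ⟨y - 1, ⟨by linarith, by linarith⟩, ?_⟩
      rw [fH_eq4 (by linarith) (by linarith)]
      ring
  · -- image J5 = J1
    ext y
    simp only [Set.mem_image, J5, J1, Set.mem_Ico]
    constructor
    · rintro ⟨x, ⟨h1, h2⟩, rfl⟩
      rw [fH_eq5 h1 h2]
      by_cases hx : x = 0
      · rw [if_pos hx]; norm_num
      · rw [if_neg hx]
        exact ⟨by linarith, by linarith⟩
    · rintro ⟨h1, h2⟩
      rcases eq_or_lt_of_le h1 with he | hl
      · refine ⟨0, ⟨le_refl 0, by norm_num⟩, ?_⟩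
        rw [fH_eq5 (le_refl 0) (by norm_num), if_pos rfl]
        exact he
      · refine ⟨y + 1, ⟨by linarith, by linarith⟩, ?_⟩
        rw [fH_eq5 (by linarith) (by linarith), if_neg (by intro h'; linarith)]
        ring
  · -- image J6 = J4
    ext y
    simp only [Set.mem_image, J6, J4, Set.mem_Ico]
    constructor
    · rintro ⟨x, ⟨h1, h2⟩, rfl⟩
      rw [fH_eq6 h1 h2]
      have hd : 3*x - 2 < 0 := by linarith
      constructor
      · rw [le_div_iff_of_neg hd]; linarith
      · rw [div_lt_iff_of_neg hd]; linarith
    · rintro ⟨h1, h2⟩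
      have hd : (0:ℝ) < 3*y + 2 := by linarith
      have hx1 : 1/3 ≤ (1+2*y)/(3*y+2) := by rw [le_div_iff₀ hd]; linarith
      have hx2 : (1+2*y)/(3*y+2) < 1/2 := by rw [div_lt_iff₀ hd]; linarith
      refine ⟨(1+2*y)/(3*y+2), ⟨hx1, hx2⟩, ?_⟩
      have hdne : 3*y + 2 ≠ 0 := ne_of_gt hd
      have hden : 3*((1+2*y)/(3*y+2)) - 2 ≠ 0 := by
        intro h'; linarith
      rw [fH_eq6 hx1 hx2, div_eq_iff hden]
      have hq := div_mul_cancel₀ (1+2*y) hdne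
      linear_combination -hq
  · -- image J7 = J5 ∪ J6
    have hU : J5 ∪ J6 = Set.Ico (0 : ℝ) (1/2) := by
      rw [J5, J6]; exact Set.Ico_union_Ico_eq_Ico (by norm_num) (by norm_num)
    rw [hU]
    ext y
    simp only [Set.mem_image, J7, Set.mem_Ico]
    constructor
    · rintro ⟨x, ⟨h1, h2⟩, rfl⟩
      rw [fH_eq78 h1 (by linarith)]
      have hx : (0:ℝ) < x := by linarith
      have hA : 1/x ≤ 2 := by rw [div_le_iff₀ hx]; linarith
      have hB : 3/2 < 1/x := by rw [lt_div_iff₀ hx]; linarith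
      exact ⟨by linarith, by linarith⟩
    · rintro ⟨h1, h2⟩
      have hd : (0:ℝ) < 2 - y := by linarith
      have hx1 : 1/2 ≤ 1/(2-y) := by rw [le_div_iff₀ hd]; linarith
      have hx2 : 1/(2-y) < 2/3 := by rw [div_lt_iff₀ hd]; linarith
      refine ⟨1/(2-y), ⟨hx1, hx2⟩, ?_⟩
      rw [fH_eq78 hx1 (by linarith), one_div_one_div]
      ring
  · -- image J8 = J7 ∪ J8
    have hU : J7 ∪ J8 = Set.Ico (1/2 : ℝ) 1 := by
      rw [J7, J8]; exact Set.Ico_union_Ico_eq_Ico (by norm_num) (by norm_num)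
    rw [hU]
    ext y
    simp only [Set.mem_image, J8, Set.mem_Ico]
    constructor
    · rintro ⟨x, ⟨h1, h2⟩, rfl⟩
      rw [fH_eq78 (by linarith) h2]
      have hx : (0:ℝ) < x := by linarith
      have hA : 1/x ≤ 3/2 := by rw [div_le_iff₀ hx]; linarith
      have hB : 1 < 1/x := by rw [lt_div_iff₀ hx]; linarith
      exact ⟨by linarith, by linarith⟩
    · rintro ⟨h1, h2⟩
      have hd : (0:ℝ) < 2 - y := by linarith
      have hx1 : 2/3 ≤ 1/(2-y) := by rw [le_div_iff₀ hd]; linarith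
      have hx2 : 1/(2-y) < 1 := by rw [div_lt_iff₀ hd]; linarith
      refine ⟨1/(2-y), ⟨hx1, hx2⟩, ?_⟩
      rw [fH_eq78 (by linarith) hx2, one_div_one_div]
      ring
end

section
/- (Recoding Lemma) If ω = (ω₀,…,ω_n) is an A-admissible word with ω_n ∈ {1,2,7,8}, then there exists an H-admissible word τ = (τ₀,…,τ_n) of the same length such that τ₀ = ω₀ and I_A(ω) = I_H(τ); moreover, if ω_n ∈ {1,8} then τ_n = ω_n, if ω_n = 2 then τ_n ∈ {2,4}, and if ω_n = 7 then τ_n ∈ {5,7}. -/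
/-- The Markov partition `J₁,…,J₈` of `[-1,1)`, indexed by `Fin 8`
(index `i : Fin 8` corresponds to the symbol `i+1 ∈ {1,…,8}`). -/
noncomputable def Jint : Fin 8 → Set ℝ :=
  ![Set.Ico (-1) (-2/3), Set.Ico (-2/3) (-1/2), Set.Ico (-1/2) (-1/3), Set.Ico (-1/3) 0,
    Set.Ico 0 (1/3), Set.Ico (1/3) (1/2), Set.Ico (1/2) (2/3), Set.Ico (2/3) 1]

/-- The Artin transition matrix `M_A` (rows/columns indexed by `Fin 8`,
index `i` corresponding to symbol `i+1`). -/
def MA : Matrix (Fin 8) (Fin 8) ℤ :=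
  !![1,1,0,0,0,0,0,0;
     0,0,1,1,0,0,0,0;
     0,0,0,0,0,0,1,0;
     0,0,0,0,0,0,0,1;
     1,0,0,0,0,0,0,0;
     0,1,0,0,0,0,0,0;
     0,0,0,0,1,1,0,0;
     0,0,0,0,0,0,1,1]

/-- The Hurwitz transition matrix `M_H`. -/
def MH : Matrix (Fin 8) (Fin 8) ℤ :=
  !![1,1,0,0,0,0,0,0;
     0,0,1,1,0,0,0,0;
     0,0,0,0,1,0,0,0;
     0,0,0,0,0,0,0,1;
     1,0,0,0,0,0,0,0;
     0,0,0,1,0,0,0,0;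
     0,0,0,0,1,1,0,0;
     0,0,0,0,0,0,1,1]

/-- The Artin cylinder interval `I_A(ω₀,…,ω_n) = ⋂ᵢ f̃_A⁻ⁱ(J_{ωᵢ})`. -/
noncomputable def cylA (n : ℕ) (w : Fin (n + 1) → Fin 8) : Set ℝ :=
  ⋂ i : Fin (n + 1), fA^[(i : ℕ)] ⁻¹' Jint (w i)

/-- The Hurwitz cylinder interval `I_H(τ₀,…,τ_n) = ⋂ᵢ f̃_H⁻ⁱ(J_{τᵢ})`. -/
noncomputable def cylH (n : ℕ) (w : Fin (n + 1) → Fin 8) : Set ℝ :=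
  ⋂ i : Fin (n + 1), fH^[(i : ℕ)] ⁻¹' Jint (w i)

-- tests
lemma Jint2' : Jint 2 = Set.Ico (-1/2 : ℝ) (-1/3) := rfl
lemma MA2 : ∀ j : Fin 8, MA 2 j = 1 → j = 6 := by decide
lemma MAH' : ∀ a b : Fin 8, a ≠ 2 → a ≠ 5 → MA a b = 1 → MH a b = 1 := by 
  intro a b; fin_cases a <;> fin_cases b <;> decide
lemma mem_cylA' {n : ℕ} {w : Fin (n+1) → Fin 8} {x : ℝ} :
    x ∈ cylA n w ↔ ∀ i : Fin (n+1), fA^[(i:ℕ)] x ∈ Jint (w i) := Set.mem_iInter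

lemma key3 {x : ℝ} (h1 : -1/2 ≤ x) (h2 : x < -1/3) :
    fA x ∈ Set.Ico (1/2:ℝ) (2/3) ∧ fH x ∈ Set.Ico (0:ℝ) (1/3) ∧
    fH (fH x) ∈ Set.Ico (-1:ℝ) (-2/3) ∧
    fH (fH (fH x)) = fA (fA (fA x)) ∧
    (fA (fA (fA x)) ∈ Set.Ico (-1:ℝ) (-2/3) → fA (fA x) ∈ Set.Ico (0:ℝ) (1/3)) ∧
    (fA (fA (fA x)) ∈ Set.Ico (-2/3:ℝ) (-1/2) → fA (fA x) ∈ Set.Ico (1/3:ℝ) (1/2)) := by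
  have hx1 : (0:ℝ) < x + 1 := by linarith
  have hb2 : (0:ℝ) < 3*x + 2 := by linarith
  have hne : x + 1 ≠ 0 := ne_of_gt hx1
  have hbne : 3*x + 2 ≠ 0 := ne_of_gt hb2
  have ha1 : fA x = x + 1 := by
    unfold fA Stilde
    rw [if_neg (by linarith), if_pos (by linarith), if_pos (by linarith)]
  have ha2 : fA (x + 1) = (2*x+1)/(x+1) := by
    unfold fA Tinvtilde
    rw [if_neg (by linarith), if_neg (by linarith), if_neg (by linarith)]
    rcases le_or_gt (x + 1) (1/2) with h | h
    · have hx : x = -1/2 := by linarith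
      rw [if_pos h, hx]; norm_num
    · rw [if_neg (not_le.mpr h)]
      field_simp
      ring
  have ha3 : fA ((2*x+1)/(x+1)) = x/(x+1) := by
    have hu0 : (0:ℝ) ≤ (2*x+1)/(x+1) := div_nonneg (by linarith) hx1.le
    have hu : (2*x+1)/(x+1) < 1/2 := by
      rw [div_lt_iff₀ hx1]; linarith
    unfold fA Stilde
    rw [if_neg (by linarith), if_pos (by linarith), if_neg (by linarith)]
    rcases eq_or_lt_of_le hu0 with h | h
    · have hx : x = -1/2 := by
        have := h.symm
        rw [div_eq_zero_iff] at this
        rcases this with h' | h'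
        · linarith
        · exact absurd h' hne
      rw [if_pos h.symm, hx]; norm_num
    · rw [if_neg (ne_of_gt h)]
      field_simp
      ring
  have hh1 : fH x = (1+2*x)/(2+3*x) := by
    unfold fH Ttilde
    rw [if_pos (by linarith)]
    rcases le_or_gt x (-1/2) with h | h
    · have hx : x = -1/2 := by linarith
      rw [if_pos h, hx]; norm_num
    · rw [if_neg (not_le.mpr h), if_pos (by linarith : x ≤ 0)]
  have hv0 : (0:ℝ) ≤ (1+2*x)/(2+3*x) := div_nonneg (by linarith) (by linarith)
  have hv : (1+2*x)/(2+3*x) < 1/3 := by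
    rw [div_lt_iff₀ (by linarith : (0:ℝ) < 2+3*x)]; linarith
  have hh2 : fH ((1+2*x)/(2+3*x)) = -((x+1)/(3*x+2)) := by
    unfold fH Stilde
    rw [if_neg (by linarith), if_pos (by linarith), if_neg (by linarith)]
    rcases eq_or_lt_of_le hv0 with h | h
    · have hx : x = -1/2 := by
        have := h.symm
        rw [div_eq_zero_iff] at this
        rcases this with h' | h'
        · linarith
        · linarith
      rw [if_pos h.symm, hx]; norm_num
    · rw [if_neg (ne_of_gt h), div_sub_one (by linarith : (2:ℝ)+3*x ≠ 0),
        show (1+2*x) - (2+3*x) = -(x+1) from by ring,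
        show (2:ℝ)+3*x = 3*x+2 from by ring, neg_div]
  have hz1 : -((x+1)/(3*x+2)) ≤ -1/2 := by
    rw [show (-1/2:ℝ) = -(1/2) from by norm_num, neg_le_neg_iff, le_div_iff₀ hb2]; linarith
  have hz0 : (-1:ℝ) ≤ -((x+1)/(3*x+2)) := by
    rw [show (-1:ℝ) = -(1) from by norm_num, neg_le_neg_iff, div_le_one hb2]; linarith
  have hz2 : -((x+1)/(3*x+2)) < -2/3 := by
    rw [show (-2/3 : ℝ) = -(2/3) by norm_num, neg_lt_neg_iff, lt_div_iff₀ hb2]; linarith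
  have hh3 : fH (-((x+1)/(3*x+2))) = x/(x+1) := by
    unfold fH Ttilde
    rw [if_pos (by linarith), if_pos hz1, one_div, inv_neg, inv_div, sub_neg_eq_add]
    field_simp
    ring
  have hA2 : fA (fA x) = (2*x+1)/(x+1) := by rw [ha1, ha2]
  have hA3 : fA (fA (fA x)) = x/(x+1) := by rw [ha1, ha2, ha3]
  refine ⟨?_, ?_, ?_, ?_, ?_, ?_⟩
  · rw [ha1]; constructor <;> [linarith; linarith]
  · rw [hh1]; exact ⟨hv0, hv⟩
  · rw [hh1, hh2]; exact ⟨hz0, hz2⟩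
  · rw [hh1, hh2, hh3, hA3]
  · intro h
    rw [hA3] at h
    rw [hA2]
    have h' := h.2
    rw [div_lt_iff₀ hx1] at h'
    refine ⟨div_nonneg (by linarith) hx1.le, ?_⟩
    rw [div_lt_iff₀ hx1]; linarith
  · intro h
    rw [hA3] at h
    rw [hA2]
    have h' := h.1
    rw [le_div_iff₀ hx1] at h'
    constructor
    · rw [le_div_iff₀ hx1]; linarith
    · rw [div_lt_iff₀ hx1]; linarith

lemma key6 {x : ℝ} (h1 : 1/3 ≤ x) (h2 : x < 1/2) :
    fA x ∈ Set.Ico (-2/3:ℝ) (-1/2) ∧ fH x ∈ Set.Ico (-1/3:ℝ) 0 ∧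
    fH (fH x) ∈ Set.Ico (2/3:ℝ) 1 ∧
    fH (fH (fH x)) = fA (fA (fA x)) ∧
    (fA (fA (fA x)) ∈ Set.Ico (1/2:ℝ) (2/3) → fA (fA x) ∈ Set.Ico (-1/2:ℝ) (-1/3)) ∧
    (fA (fA (fA x)) ∈ Set.Ico (2/3:ℝ) 1 → fA (fA x) ∈ Set.Ico (-1/3:ℝ) 0) := by
  have hx1 : (0:ℝ) < 1 - x := by linarith
  have hd : (0:ℝ) < 2 - 3*x := by linarith
  have hne : (1:ℝ) - x ≠ 0 := ne_of_gt hx1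
  have ha1 : fA x = x - 1 := by
    unfold fA Stilde
    rw [if_neg (by linarith), if_pos (by linarith), if_neg (by linarith),
      if_neg (by intro h; rw [h] at h1; linarith)]
  have ha2 : fA (x - 1) = (2*x-1)/(1-x) := by
    unfold fA Ttilde
    rw [if_pos (by linarith), if_pos (by linarith : x - 1 ≤ -1/2)]
    rw [show x - 1 = -(1-x) from by ring, one_div, inv_neg, sub_neg_eq_add]
    field_simp
    ring
  have hu1 : (-1/2 : ℝ) ≤ (2*x-1)/(1-x) := by
    rw [show (-1/2:ℝ) = -(1/2) from by norm_num, neg_le, ← neg_div, div_le_iff₀ hx1]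
    linarith
  have hu2 : (2*x-1)/(1-x) < 0 := div_neg_of_neg_of_pos (by linarith) hx1
  have ha3 : fA ((2*x-1)/(1-x)) = x/(1-x) := by
    unfold fA Stilde
    rw [if_neg (by linarith), if_pos (by linarith), if_pos hu2]
    field_simp
    ring
  have hh1 : fH x = (1-2*x)/(3*x-2) := by
    unfold fH Tinvtilde
    rw [if_neg (by linarith), if_neg (by linarith), if_neg (by linarith),
      if_pos (by linarith : x ≤ 1/2)]
  have hv1 : (-1/3 : ℝ) ≤ (1-2*x)/(3*x-2) := by
    rw [show (1-2*x)/(3*x-2) = (2*x-1)/(2-3*x) from by rw [div_eq_div_iff (by linarith) (by linarith)]; ring]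
    rw [show (-1/3:ℝ) = -(1/3) from by norm_num, neg_le, ← neg_div, div_le_iff₀ hd]
    linarith
  have hv2 : (1-2*x)/(3*x-2) < 0 := div_neg_of_pos_of_neg (by linarith) (by linarith)
  have hh2 : fH ((1-2*x)/(3*x-2)) = (x-1)/(3*x-2) := by
    unfold fH Stilde
    rw [if_neg (by linarith), if_pos (by linarith), if_pos hv2]
    rw [div_add' _ _ _ (by linarith : (3:ℝ)*x-2 ≠ 0)]
    ring_nf
  have hz1 : (2/3:ℝ) ≤ (x-1)/(3*x-2) := by
    rw [show (x-1)/(3*x-2) = (1-x)/(2-3*x) from by rw [div_eq_div_iff (by linarith) (by linarith)]; ring]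
    rw [le_div_iff₀ hd]; linarith
  have hz2 : (x-1)/(3*x-2) < 1 := by
    rw [show (x-1)/(3*x-2) = (1-x)/(2-3*x) from by rw [div_eq_div_iff (by linarith) (by linarith)]; ring]
    rw [div_lt_one hd]; linarith
  have hh3 : fH ((x-1)/(3*x-2)) = x/(1-x) := by
    unfold fH Tinvtilde
    rw [if_neg (by linarith), if_neg (by linarith), if_neg (by linarith),
      if_neg (by linarith : ¬ (x-1)/(3*x-2) ≤ 1/2)]
    rw [one_div, show (x-1)/(3*x-2) = (1-x)/(2-3*x) from by rw [div_eq_div_iff (by linarith) (by linarith)]; ring, inv_div]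
    field_simp
    ring
  have hA2 : fA (fA x) = (2*x-1)/(1-x) := by rw [ha1, ha2]
  have hA3 : fA (fA (fA x)) = x/(1-x) := by rw [ha1, ha2, ha3]
  refine ⟨?_, ?_, ?_, ?_, ?_, ?_⟩
  · rw [ha1]; constructor <;> [linarith; linarith]
  · rw [hh1]; exact ⟨hv1, hv2⟩
  · rw [hh1, hh2]; exact ⟨hz1, hz2⟩
  · rw [hh1, hh2, hh3, hA3]
  · intro h
    rw [hA3] at h
    rw [hA2]
    have h' := h.2
    rw [div_lt_iff₀ hx1] at h'
    constructor
    · exact hu1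
    · rw [div_lt_iff₀ hx1]; linarith
  · intro h
    rw [hA3] at h
    rw [hA2]
    have h' := h.1
    rw [le_div_iff₀ hx1] at h'
    constructor
    · rw [show (-1/3:ℝ) = -(1/3) from by norm_num, neg_le, ← neg_div, div_le_iff₀ hx1]; linarith
    · exact hu2

lemma fAH_on {j : Fin 8} (hj2 : j ≠ 2) (hj5 : j ≠ 5) {x : ℝ} (hx : x ∈ Jint j) :
    fA x = fH x := by
  have hr : x < -1/2 ∨ (-1/3 ≤ x ∧ x < 1/3) ∨ 1/2 ≤ x := by
    rcases j with ⟨jv, hjv⟩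
    interval_cases jv
    · replace hx : x ∈ Set.Ico (-1:ℝ) (-2/3) := hx
      exact Or.inl (by rcases hx with ⟨_, h⟩; linarith)
    · replace hx : x ∈ Set.Ico (-2/3:ℝ) (-1/2) := hx
      exact Or.inl hx.2
    · exact absurd rfl hj2
    · replace hx : x ∈ Set.Ico (-1/3:ℝ) 0 := hx
      exact Or.inr (Or.inl ⟨hx.1, by rcases hx with ⟨_, h⟩; linarith⟩)
    · replace hx : x ∈ Set.Ico (0:ℝ) (1/3) := hx
      exact Or.inr (Or.inl ⟨by rcases hx with ⟨h, _⟩; linarith, hx.2⟩)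
    · exact absurd rfl hj5
    · replace hx : x ∈ Set.Ico (1/2:ℝ) (2/3) := hx
      exact Or.inr (Or.inr hx.1)
    · replace hx : x ∈ Set.Ico (2/3:ℝ) 1 := hx
      exact Or.inr (Or.inr (by rcases hx with ⟨h, _⟩; linarith))
  unfold fA fH
  rcases hr with h | ⟨h, h'⟩ | h
  · rw [if_pos (show x < -1/2 by linarith), if_pos (show x < -1/3 by linarith)]
  · rw [if_neg (show ¬ x < -1/2 by linarith), if_pos (show x < 1/2 by linarith),
      if_neg (show ¬ x < -1/3 by linarith), if_pos (show x < 1/3 by linarith)]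
  · rw [if_neg (show ¬ x < -1/2 by linarith), if_neg (show ¬ x < 1/2 by linarith),
      if_neg (show ¬ x < -1/3 by linarith), if_neg (show ¬ x < 1/3 by linarith)]

lemma mem_cylA {n : ℕ} {w : Fin (n+1) → Fin 8} {x : ℝ} :
    x ∈ cylA n w ↔ ∀ i : Fin (n+1), fA^[(i:ℕ)] x ∈ Jint (w i) := Set.mem_iInter

lemma mem_cylH {n : ℕ} {w : Fin (n+1) → Fin 8} {x : ℝ} :
    x ∈ cylH n w ↔ ∀ i : Fin (n+1), fH^[(i:ℕ)] x ∈ Jint (w i) := Set.mem_iInter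

lemma cylA_head {n : ℕ} {w : Fin (n+1) → Fin 8} {x : ℝ} (h : x ∈ cylA n w) :
    x ∈ Jint (w 0) := by simpa using mem_cylA.1 h 0

lemma cylH_head {n : ℕ} {w : Fin (n+1) → Fin 8} {x : ℝ} (h : x ∈ cylH n w) :
    x ∈ Jint (w 0) := by simpa using mem_cylH.1 h 0

lemma mem_cylA_succ {n : ℕ} (w : Fin (n+2) → Fin 8) (x : ℝ) :
    x ∈ cylA (n+1) w ↔ x ∈ Jint (w 0) ∧ fA x ∈ cylA n (fun i => w i.succ) := by
  rw [mem_cylA, mem_cylA]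
  constructor
  · intro h
    refine ⟨by simpa using h 0, fun i => ?_⟩
    have := h i.succ
    rwa [Fin.val_succ, Function.iterate_succ_apply] at this
  · rintro ⟨h0, h⟩ i
    refine Fin.cases ?_ (fun j => ?_) i
    · simpa using h0
    · rw [Fin.val_succ, Function.iterate_succ_apply]
      exact h j

lemma mem_cylH_succ {n : ℕ} (w : Fin (n+2) → Fin 8) (x : ℝ) :
    x ∈ cylH (n+1) w ↔ x ∈ Jint (w 0) ∧ fH x ∈ cylH n (fun i => w i.succ) := by
  rw [mem_cylH, mem_cylH]
  constructor
  · intro h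
    refine ⟨by simpa using h 0, fun i => ?_⟩
    have := h i.succ
    rwa [Fin.val_succ, Function.iterate_succ_apply] at this
  · rintro ⟨h0, h⟩ i
    refine Fin.cases ?_ (fun j => ?_) i
    · simpa using h0
    · rw [Fin.val_succ, Function.iterate_succ_apply]
      exact h j

lemma cylA_zero (w : Fin 1 → Fin 8) : cylA 0 w = Jint (w 0) := by
  ext x
  rw [mem_cylA]
  constructor
  · intro h; simpa using h 0
  · intro h i
    rw [Fin.eq_zero i]
    simpa using h

lemma cylH_zero (w : Fin 1 → Fin 8) : cylH 0 w = Jint (w 0) := by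
  ext x
  rw [mem_cylH]
  constructor
  · intro h; simpa using h 0
  · intro h i
    rw [Fin.eq_zero i]
    simpa using h

lemma mem_cylA_succ3 {n : ℕ} (w : Fin (n+4) → Fin 8) (x : ℝ) :
    x ∈ cylA (n+3) w ↔ x ∈ Jint (w 0) ∧ fA x ∈ Jint (w (Fin.succ 0)) ∧
      fA (fA x) ∈ Jint (w (Fin.succ (Fin.succ 0))) ∧
      fA (fA (fA x)) ∈ cylA n (fun i => w i.succ.succ.succ) := by
  have h1 := mem_cylA_succ (n := n+2) w x
  have h2 := mem_cylA_succ (n := n+1) (fun i => w i.succ) (fA x)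
  have h3 := mem_cylA_succ (n := n) (fun i : Fin (n+2) => w i.succ.succ) (fA (fA x))
  constructor
  · intro h
    obtain ⟨a, h⟩ := h1.1 h
    obtain ⟨b, h⟩ := h2.1 h
    obtain ⟨c, h⟩ := h3.1 h
    exact ⟨a, b, c, h⟩
  · rintro ⟨a, b, c, h⟩
    exact h1.2 ⟨a, h2.2 ⟨b, h3.2 ⟨c, h⟩⟩⟩

lemma mem_cylH_succ3 {n : ℕ} (w : Fin (n+4) → Fin 8) (x : ℝ) :
    x ∈ cylH (n+3) w ↔ x ∈ Jint (w 0) ∧ fH x ∈ Jint (w (Fin.succ 0)) ∧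
      fH (fH x) ∈ Jint (w (Fin.succ (Fin.succ 0))) ∧
      fH (fH (fH x)) ∈ cylH n (fun i => w i.succ.succ.succ) := by
  have h1 := mem_cylH_succ (n := n+2) w x
  have h2 := mem_cylH_succ (n := n+1) (fun i => w i.succ) (fH x)
  have h3 := mem_cylH_succ (n := n) (fun i : Fin (n+2) => w i.succ.succ) (fH (fH x))
  constructor
  · intro h
    obtain ⟨a, h⟩ := h1.1 h
    obtain ⟨b, h⟩ := h2.1 h
    obtain ⟨c, h⟩ := h3.1 h
    exact ⟨a, b, c, h⟩
  · rintro ⟨a, b, c, h⟩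
    exact h1.2 ⟨a, h2.2 ⟨b, h3.2 ⟨c, h⟩⟩⟩

lemma MAtwo : ∀ j : Fin 8, MA 2 j = 1 → j = 6 := by decide
lemma MAfive : ∀ j : Fin 8, MA 5 j = 1 → j = 1 := by decide
lemma MAsix : ∀ j : Fin 8, MA 6 j = 1 → j = 4 ∨ j = 5 := by decide
lemma MAone : ∀ j : Fin 8, MA 1 j = 1 → j = 2 ∨ j = 3 := by decide
lemma MAfour : ∀ j : Fin 8, MA 4 j = 1 → j = 0 := by decide
lemma MAthree : ∀ j : Fin 8, MA 3 j = 1 → j = 7 := by decide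
lemma MAtoMH : ∀ a b : Fin 8, a ≠ 2 → a ≠ 5 → MA a b = 1 → MH a b = 1 := by 
  intro a b; fin_cases a <;> fin_cases b <;> decide

lemma Jint_0 : Jint 0 = Set.Ico (-1:ℝ) (-2/3) := rfl
lemma Jint_1 : Jint 1 = Set.Ico (-2/3:ℝ) (-1/2) := rfl
lemma Jint_2 : Jint 2 = Set.Ico (-1/2:ℝ) (-1/3) := rfl
lemma Jint_3 : Jint 3 = Set.Ico (-1/3:ℝ) 0 := rfl
lemma Jint_4 : Jint 4 = Set.Ico (0:ℝ) (1/3) := rfl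
lemma Jint_5 : Jint 5 = Set.Ico (1/3:ℝ) (1/2) := rfl
lemma Jint_6 : Jint 6 = Set.Ico (1/2:ℝ) (2/3) := rfl
lemma Jint_7 : Jint 7 = Set.Ico (2/3:ℝ) 1 := rfl

/-- (Recoding Lemma.)  If `ω = (ω₀,…,ω_n)` is `A`-admissible and its last symbol is in
`{1,2,7,8}` (i.e. the last `Fin 8`-index is in `{0,1,6,7}`), then there is an `H`-admissible
word `τ` of the same length with `τ₀ = ω₀` and `I_A(ω) = I_H(τ)`; moreover the last symbol of
`τ` equals that of `ω` if the latter is `1` or `8` (index `0` or `7`), lies in `{2,4}`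
(indices `{1,3}`) if the last symbol of `ω` is `2` (index `1`), and lies in `{5,7}`
(indices `{4,6}`) if the last symbol of `ω` is `7` (index `6`). -/
theorem recoding_lemma (n : ℕ) (w : Fin (n + 1) → Fin 8)
    (hadm : ∀ i : Fin n, MA (w i.castSucc) (w i.succ) = 1)
    (hlast : w (Fin.last n) = 0 ∨ w (Fin.last n) = 1 ∨
      w (Fin.last n) = 6 ∨ w (Fin.last n) = 7) :
    ∃ t : Fin (n + 1) → Fin 8,
      (∀ i : Fin n, MH (t i.castSucc) (t i.succ) = 1) ∧
      t 0 = w 0 ∧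
      cylA n w = cylH n t ∧
      (w (Fin.last n) = 0 → t (Fin.last n) = 0) ∧
      (w (Fin.last n) = 7 → t (Fin.last n) = 7) ∧
      (w (Fin.last n) = 1 → t (Fin.last n) = 1 ∨ t (Fin.last n) = 3) ∧
      (w (Fin.last n) = 6 → t (Fin.last n) = 4 ∨ t (Fin.last n) = 6) := by
  revert w
  induction n using Nat.strong_induction_on with
  | _ n IH =>
    intro w hadm hlast
    rcases n with _ | m
    · exact ⟨w, fun i => i.elim0, rfl, by rw [cylA_zero, cylH_zero],
        fun h => h, fun h => h, fun h => Or.inl h, fun h => Or.inr h⟩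
    by_cases h2 : w 0 = 2
    · -- first symbol is 3 (index 2)
      have hw1 : w (Fin.succ (0 : Fin (m+1))) = 6 := by
        apply MAtwo
        have := hadm 0
        rwa [Fin.castSucc_zero, h2] at this
      rcases m with _ | m'
      · -- n = 1 : word is (3,7), recode to (3,5)
        refine ⟨Fin.cons 2 (Fin.cons 4 Fin.elim0), ?_, ?_, ?_, ?_, ?_, ?_, ?_⟩
        · intro i
          refine Fin.cases ?_ (fun j => j.elim0) i
          rw [Fin.castSucc_zero, Fin.cons_zero, Fin.cons_succ, Fin.cons_zero]
          decide
        · rw [Fin.cons_zero, h2]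
        · ext x
          rw [mem_cylA_succ w x, mem_cylH_succ _ x, cylA_zero, cylH_zero]
          simp only [Fin.cons_zero, Fin.cons_succ]
          rw [h2, hw1, Jint_2, Jint_6, Jint_4]
          constructor
          · rintro ⟨hx, -⟩
            exact ⟨hx, (key3 hx.1 hx.2).2.1⟩
          · rintro ⟨hx, -⟩
            exact ⟨hx, (key3 hx.1 hx.2).1⟩
        · intro h
          rw [show Fin.last 1 = Fin.succ (0 : Fin 1) from rfl, hw1] at h
          exact absurd h (by decide)
        · intro h
          rw [show Fin.last 1 = Fin.succ (0 : Fin 1) from rfl, hw1] at h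
          exact absurd h (by decide)
        · intro h
          rw [show Fin.last 1 = Fin.succ (0 : Fin 1) from rfl, hw1] at h
          exact absurd h (by decide)
        · intro _
          left
          rw [show Fin.last 1 = Fin.succ (0 : Fin 1) from rfl, Fin.cons_succ, Fin.cons_zero]
      rcases m' with _ | k
      · -- n = 2 : impossible, the word would end in symbol 5 or 6
        exfalso
        have hw2 := MAsix _ (by
          have := hadm (Fin.succ (0 : Fin 1))
          rwa [← Fin.succ_castSucc, Fin.castSucc_zero, hw1] at this)
        rw [show Fin.last 2 = Fin.succ (Fin.succ (0 : Fin 1)) from rfl] at hlast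
        rcases hw2 with h | h <;> rw [h] at hlast <;>
          rcases hlast with h' | h' | h' | h' <;> exact absurd h' (by decide)
      · -- n = k+3 : recode (3,7,5,...) / (3,7,6,...) to (3,5,1,...)
        have hw2 := MAsix _ (by
          have := hadm (Fin.succ (0 : Fin (k+2)))
          rwa [← Fin.succ_castSucc, Fin.castSucc_zero, hw1] at this)
        have hlink : (w (Fin.succ (Fin.succ (0 : Fin (k+2)))) = 4 ∧
              w (Fin.succ (Fin.succ (Fin.succ (0 : Fin (k+1))))) = 0) ∨
            (w (Fin.succ (Fin.succ (0 : Fin (k+2)))) = 5 ∧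
              w (Fin.succ (Fin.succ (Fin.succ (0 : Fin (k+1))))) = 1) := by
          rcases hw2 with h | h
          · refine Or.inl ⟨h, MAfour _ ?_⟩
            have := hadm (Fin.succ (Fin.succ (0 : Fin (k+1))))
            rwa [← Fin.succ_castSucc, ← Fin.succ_castSucc, Fin.castSucc_zero, h] at this
          · refine Or.inr ⟨h, MAfive _ ?_⟩
            have := hadm (Fin.succ (Fin.succ (0 : Fin (k+1))))
            rwa [← Fin.succ_castSucc, ← Fin.succ_castSucc, Fin.castSucc_zero, h] at this
        obtain ⟨t', adm', ht0, hcyl, e0, e7, e1, e6⟩ :=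
          IH k (by omega) (fun i : Fin (k+1) => w i.succ.succ.succ)
            (fun i => by
              have := hadm i.succ.succ.succ
              rwa [← Fin.succ_castSucc, ← Fin.succ_castSucc, ← Fin.succ_castSucc] at this)
            (by simpa [Fin.succ_last] using hlast)
        have ht0' : t' 0 = w (Fin.succ (Fin.succ (Fin.succ (0 : Fin (k+1))))) := ht0
        have hd : w (Fin.succ (Fin.succ (Fin.succ (0 : Fin (k+1))))) = 0 ∨
            w (Fin.succ (Fin.succ (Fin.succ (0 : Fin (k+1))))) = 1 := by
          rcases hlink with ⟨-, h⟩ | ⟨-, h⟩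
          · exact Or.inl h
          · exact Or.inr h
        have hwl : w (Fin.last (k+3)) =
            (fun i : Fin (k+1) => w i.succ.succ.succ) (Fin.last k) := by
          simp [Fin.succ_last]
        refine ⟨Fin.cons 2 (Fin.cons 4 (Fin.cons 0 t')), ?_, ?_, ?_, ?_, ?_, ?_, ?_⟩
        · intro i
          refine Fin.cases ?_ (fun j => ?_) i
          · rw [Fin.castSucc_zero, Fin.cons_zero, Fin.cons_succ, Fin.cons_zero]
            decide
          · rw [← Fin.succ_castSucc, Fin.cons_succ, Fin.cons_succ]
            refine Fin.cases ?_ (fun l => ?_) j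
            · rw [Fin.castSucc_zero, Fin.cons_zero, Fin.cons_succ, Fin.cons_zero]
              decide
            · rw [← Fin.succ_castSucc, Fin.cons_succ, Fin.cons_succ]
              refine Fin.cases ?_ (fun p => ?_) l
              · rw [Fin.castSucc_zero, Fin.cons_zero, Fin.cons_succ, ht0']
                rcases hd with h | h <;> rw [h] <;> decide
              · rw [← Fin.succ_castSucc, Fin.cons_succ, Fin.cons_succ]
                exact adm' p
        · rw [Fin.cons_zero, h2]
        · ext x
          rw [mem_cylA_succ3 w x, mem_cylH_succ3 _ x]
          simp only [Fin.cons_zero, Fin.cons_succ]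
          rw [h2, hw1, hcyl, Jint_2, Jint_6, Jint_4, Jint_0]
          constructor
          · rintro ⟨hx, -, -, h3⟩
            obtain ⟨k1, k2, k3, k4, k5, k6⟩ := key3 hx.1 hx.2
            exact ⟨hx, k2, k3, by rw [k4]; exact h3⟩
          · rintro ⟨hx, -, -, h3⟩
            obtain ⟨k1, k2, k3, k4, k5, k6⟩ := key3 hx.1 hx.2
            have h3' : fA (fA (fA x)) ∈ cylH k t' := by rw [← k4]; exact h3
            have hhead : fA (fA (fA x)) ∈
                Jint (w (Fin.succ (Fin.succ (Fin.succ (0 : Fin (k+1)))))) := by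
              have := cylH_head h3'
              rwa [ht0'] at this
            refine ⟨hx, k1, ?_, h3'⟩
            rcases hlink with ⟨hc, hc'⟩ | ⟨hc, hc'⟩
            · rw [hc, Jint_4]
              exact k5 (by rw [hc', Jint_0] at hhead; exact hhead)
            · rw [hc, Jint_5]
              exact k6 (by rw [hc', Jint_1] at hhead; exact hhead)
        · intro h
          rw [← Fin.succ_last, Fin.cons_succ, ← Fin.succ_last, Fin.cons_succ,
            ← Fin.succ_last, Fin.cons_succ]
          exact e0 (by rw [Fin.succ_last, Fin.succ_last, Fin.succ_last]; exact h)
        · intro h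
          rw [← Fin.succ_last, Fin.cons_succ, ← Fin.succ_last, Fin.cons_succ,
            ← Fin.succ_last, Fin.cons_succ]
          exact e7 (by rw [Fin.succ_last, Fin.succ_last, Fin.succ_last]; exact h)
        · intro h
          rw [← Fin.succ_last, Fin.cons_succ, ← Fin.succ_last, Fin.cons_succ,
            ← Fin.succ_last, Fin.cons_succ]
          exact e1 (by rw [Fin.succ_last, Fin.succ_last, Fin.succ_last]; exact h)
        · intro h
          rw [← Fin.succ_last, Fin.cons_succ, ← Fin.succ_last, Fin.cons_succ,
            ← Fin.succ_last, Fin.cons_succ]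
          exact e6 (by rw [Fin.succ_last, Fin.succ_last, Fin.succ_last]; exact h)
    by_cases h5 : w 0 = 5
    · -- first symbol is 6 (index 5)
      have hw1 : w (Fin.succ (0 : Fin (m+1))) = 1 := by
        apply MAfive
        have := hadm 0
        rwa [Fin.castSucc_zero, h5] at this
      rcases m with _ | m'
      · -- n = 1 : word is (6,2), recode to (6,4)
        refine ⟨Fin.cons 5 (Fin.cons 3 Fin.elim0), ?_, ?_, ?_, ?_, ?_, ?_, ?_⟩
        · intro i
          refine Fin.cases ?_ (fun j => j.elim0) i
          rw [Fin.castSucc_zero, Fin.cons_zero, Fin.cons_succ, Fin.cons_zero]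
          decide
        · rw [Fin.cons_zero, h5]
        · ext x
          rw [mem_cylA_succ w x, mem_cylH_succ _ x, cylA_zero, cylH_zero]
          simp only [Fin.cons_zero, Fin.cons_succ]
          rw [h5, hw1, Jint_5, Jint_1, Jint_3]
          constructor
          · rintro ⟨hx, -⟩
            exact ⟨hx, (key6 hx.1 hx.2).2.1⟩
          · rintro ⟨hx, -⟩
            exact ⟨hx, (key6 hx.1 hx.2).1⟩
        · intro h
          rw [show Fin.last 1 = Fin.succ (0 : Fin 1) from rfl, hw1] at h
          exact absurd h (by decide)
        · intro h
          rw [show Fin.last 1 = Fin.succ (0 : Fin 1) from rfl, hw1] at h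
          exact absurd h (by decide)
        · intro _
          right
          rw [show Fin.last 1 = Fin.succ (0 : Fin 1) from rfl, Fin.cons_succ, Fin.cons_zero]
        · intro h
          rw [show Fin.last 1 = Fin.succ (0 : Fin 1) from rfl, hw1] at h
          exact absurd h (by decide)
      rcases m' with _ | k
      · -- n = 2 : impossible, the word would end in symbol 3 or 4
        exfalso
        have hw2 := MAone _ (by
          have := hadm (Fin.succ (0 : Fin 1))
          rwa [← Fin.succ_castSucc, Fin.castSucc_zero, hw1] at this)
        rw [show Fin.last 2 = Fin.succ (Fin.succ (0 : Fin 1)) from rfl] at hlast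
        rcases hw2 with h | h <;> rw [h] at hlast <;>
          rcases hlast with h' | h' | h' | h' <;> exact absurd h' (by decide)
      · -- n = k+3 : recode (6,2,3,...) / (6,2,4,...) to (6,4,8,...)
        have hw2 := MAone _ (by
          have := hadm (Fin.succ (0 : Fin (k+2)))
          rwa [← Fin.succ_castSucc, Fin.castSucc_zero, hw1] at this)
        have hlink : (w (Fin.succ (Fin.succ (0 : Fin (k+2)))) = 2 ∧
              w (Fin.succ (Fin.succ (Fin.succ (0 : Fin (k+1))))) = 6) ∨
            (w (Fin.succ (Fin.succ (0 : Fin (k+2)))) = 3 ∧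
              w (Fin.succ (Fin.succ (Fin.succ (0 : Fin (k+1))))) = 7) := by
          rcases hw2 with h | h
          · refine Or.inl ⟨h, MAtwo _ ?_⟩
            have := hadm (Fin.succ (Fin.succ (0 : Fin (k+1))))
            rwa [← Fin.succ_castSucc, ← Fin.succ_castSucc, Fin.castSucc_zero, h] at this
          · refine Or.inr ⟨h, MAthree _ ?_⟩
            have := hadm (Fin.succ (Fin.succ (0 : Fin (k+1))))
            rwa [← Fin.succ_castSucc, ← Fin.succ_castSucc, Fin.castSucc_zero, h] at this
        obtain ⟨t', adm', ht0, hcyl, e0, e7, e1, e6⟩ :=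
          IH k (by omega) (fun i : Fin (k+1) => w i.succ.succ.succ)
            (fun i => by
              have := hadm i.succ.succ.succ
              rwa [← Fin.succ_castSucc, ← Fin.succ_castSucc, ← Fin.succ_castSucc] at this)
            (by simpa [Fin.succ_last] using hlast)
        have ht0' : t' 0 = w (Fin.succ (Fin.succ (Fin.succ (0 : Fin (k+1))))) := ht0
        have hd : w (Fin.succ (Fin.succ (Fin.succ (0 : Fin (k+1))))) = 6 ∨
            w (Fin.succ (Fin.succ (Fin.succ (0 : Fin (k+1))))) = 7 := by
          rcases hlink with ⟨-, h⟩ | ⟨-, h⟩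
          · exact Or.inl h
          · exact Or.inr h
        refine ⟨Fin.cons 5 (Fin.cons 3 (Fin.cons 7 t')), ?_, ?_, ?_, ?_, ?_, ?_, ?_⟩
        · intro i
          refine Fin.cases ?_ (fun j => ?_) i
          · rw [Fin.castSucc_zero, Fin.cons_zero, Fin.cons_succ, Fin.cons_zero]
            decide
          · rw [← Fin.succ_castSucc, Fin.cons_succ, Fin.cons_succ]
            refine Fin.cases ?_ (fun l => ?_) j
            · rw [Fin.castSucc_zero, Fin.cons_zero, Fin.cons_succ, Fin.cons_zero]
              decide
            · rw [← Fin.succ_castSucc, Fin.cons_succ, Fin.cons_succ]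
              refine Fin.cases ?_ (fun p => ?_) l
              · rw [Fin.castSucc_zero, Fin.cons_zero, Fin.cons_succ, ht0']
                rcases hd with h | h <;> rw [h] <;> decide
              · rw [← Fin.succ_castSucc, Fin.cons_succ, Fin.cons_succ]
                exact adm' p
        · rw [Fin.cons_zero, h5]
        · ext x
          rw [mem_cylA_succ3 w x, mem_cylH_succ3 _ x]
          simp only [Fin.cons_zero, Fin.cons_succ]
          rw [h5, hw1, hcyl, Jint_5, Jint_1, Jint_3, Jint_7]
          constructor
          · rintro ⟨hx, -, -, h3⟩
            obtain ⟨k1, k2, k3, k4, k5, k6⟩ := key6 hx.1 hx.2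
            exact ⟨hx, k2, k3, by rw [k4]; exact h3⟩
          · rintro ⟨hx, -, -, h3⟩
            obtain ⟨k1, k2, k3, k4, k5, k6⟩ := key6 hx.1 hx.2
            have h3' : fA (fA (fA x)) ∈ cylH k t' := by rw [← k4]; exact h3
            have hhead : fA (fA (fA x)) ∈
                Jint (w (Fin.succ (Fin.succ (Fin.succ (0 : Fin (k+1)))))) := by
              have := cylH_head h3'
              rwa [ht0'] at this
            refine ⟨hx, k1, ?_, h3'⟩
            rcases hlink with ⟨hc, hc'⟩ | ⟨hc, hc'⟩
            · rw [hc, Jint_2]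
              exact k5 (by rw [hc', Jint_6] at hhead; exact hhead)
            · rw [hc, Jint_3]
              exact k6 (by rw [hc', Jint_7] at hhead; exact hhead)
        · intro h
          rw [← Fin.succ_last, Fin.cons_succ, ← Fin.succ_last, Fin.cons_succ,
            ← Fin.succ_last, Fin.cons_succ]
          exact e0 (by rw [Fin.succ_last, Fin.succ_last, Fin.succ_last]; exact h)
        · intro h
          rw [← Fin.succ_last, Fin.cons_succ, ← Fin.succ_last, Fin.cons_succ,
            ← Fin.succ_last, Fin.cons_succ]
          exact e7 (by rw [Fin.succ_last, Fin.succ_last, Fin.succ_last]; exact h)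
        · intro h
          rw [← Fin.succ_last, Fin.cons_succ, ← Fin.succ_last, Fin.cons_succ,
            ← Fin.succ_last, Fin.cons_succ]
          exact e1 (by rw [Fin.succ_last, Fin.succ_last, Fin.succ_last]; exact h)
        · intro h
          rw [← Fin.succ_last, Fin.cons_succ, ← Fin.succ_last, Fin.cons_succ,
            ← Fin.succ_last, Fin.cons_succ]
          exact e6 (by rw [Fin.succ_last, Fin.succ_last, Fin.succ_last]; exact h)
    -- generic case
    obtain ⟨t', adm', ht0, hcyl, e0, e7, e1, e6⟩ :=
      IH m (Nat.lt_succ_self m) (fun i => w i.succ)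
        (fun i => by
          have := hadm i.succ
          rwa [← Fin.succ_castSucc] at this)
        (by simpa [Fin.succ_last] using hlast)
    have hw0 : w (Fin.last (m+1)) = w (Fin.last m).succ := by rw [Fin.succ_last]
    refine ⟨Fin.cons (w 0) t', ?_, Fin.cons_zero _ _, ?_, ?_, ?_, ?_, ?_⟩
    · intro i
      refine Fin.cases ?_ (fun j => ?_) i
      · rw [Fin.castSucc_zero, Fin.cons_zero, Fin.cons_succ, ht0]
        exact MAtoMH _ _ h2 h5 (by have := hadm 0; rwa [Fin.castSucc_zero] at this)
      · rw [← Fin.succ_castSucc, Fin.cons_succ, Fin.cons_succ]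
        exact adm' j
    · have hts : (fun i : Fin (m+1) => (Fin.cons (w 0) t' : Fin (m+2) → Fin 8) i.succ) = t' := by
        funext i; rw [Fin.cons_succ]
      ext x
      rw [mem_cylA_succ w x, mem_cylH_succ (Fin.cons (w 0) t') x, Fin.cons_zero, hts, ← hcyl]
      constructor
      · rintro ⟨hx, hfx⟩
        exact ⟨hx, by rwa [← fAH_on h2 h5 hx]⟩
      · rintro ⟨hx, hfx⟩
        exact ⟨hx, by rwa [fAH_on h2 h5 hx]⟩
    · intro h
      rw [← Fin.succ_last, Fin.cons_succ]
      exact e0 (hw0.symm.trans h)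
    · intro h
      rw [← Fin.succ_last, Fin.cons_succ]
      exact e7 (hw0.symm.trans h)
    · intro h
      rw [← Fin.succ_last, Fin.cons_succ]
      exact e1 (hw0.symm.trans h)
    · intro h
      rw [← Fin.succ_last, Fin.cons_succ]
      exact e6 (hw0.symm.trans h)
end

section
/- Both the Artin map f̃_A and the Hurwitz map f̃_H are topologically transitive on [-1,1): for every pair of nonempty relatively open subsets U, V of [-1,1) there exists an integer n ≥ 0 such that f̃^n(U) ∩ V ≠ ∅ (where f̃ denotes f̃_A, respectively f̃_H). -/
open Set

lemma Ttilde_left {x : ℝ} (h : x ≤ -1/2) : Ttilde x = -2 - 1/x := if_pos h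

lemma Ttilde_mid {x : ℝ} (h1 : -1/2 < x) (h2 : x ≤ 0) :
    Ttilde x = (1 + 2*x) / (2 + 3*x) := by
  rw [Ttilde, if_neg (by linarith), if_pos h2]

lemma Ttilde_right {x : ℝ} (h : 0 < x) : Ttilde x = 1 / (2 - x) := by
  rw [Ttilde, if_neg (by linarith), if_neg (by linarith)]

lemma Tinv_left {x : ℝ} (h : x ≤ 0) : Tinvtilde x = -1 / (2 + x) := if_pos h

lemma Tinv_mid {x : ℝ} (h1 : 0 < x) (h2 : x ≤ 1/2) :
    Tinvtilde x = (1 - 2*x) / (3*x - 2) := by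
  rw [Tinvtilde, if_neg (by linarith), if_pos h2]

lemma Tinv_right {x : ℝ} (h : 1/2 < x) : Tinvtilde x = 2 - 1/x := by
  rw [Tinvtilde, if_neg (by linarith), if_neg (by linarith)]

lemma Stilde_neg {x : ℝ} (h : x < 0) : Stilde x = x + 1 := if_pos h

lemma Stilde_zero : Stilde 0 = -1 := by norm_num [Stilde]

lemma Stilde_pos {x : ℝ} (h : 0 < x) : Stilde x = x - 1 := by
  rw [Stilde, if_neg (by linarith), if_neg (by linarith)]

lemma fA_T {x : ℝ} (h : x < -1/2) : fA x = Ttilde x := if_pos h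

lemma fA_S {x : ℝ} (h1 : -1/2 ≤ x) (h2 : x < 1/2) : fA x = Stilde x := by
  rw [fA, if_neg (by linarith), if_pos h2]

lemma fA_Ti {x : ℝ} (h : 1/2 ≤ x) : fA x = Tinvtilde x := by
  rw [fA, if_neg (by linarith), if_neg (by linarith)]

lemma fH_T {x : ℝ} (h : x < -1/3) : fH x = Ttilde x := if_pos h

lemma fH_S {x : ℝ} (h1 : -1/3 ≤ x) (h2 : x < 1/3) : fH x = Stilde x := by
  rw [fH, if_neg (by linarith), if_pos h2]

lemma fH_Ti {x : ℝ} (h : 1/3 ≤ x) : fH x = Tinvtilde x := by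
  rw [fH, if_neg (by linarith), if_neg (by linarith)]


lemma fA_mem {x : ℝ} (hx : x ∈ Ico (-1:ℝ) 1) : fA x ∈ Ico (-1:ℝ) 1 := by
  obtain ⟨h1, h2⟩ := hx
  rcases lt_or_ge x (-1/2) with h | h
  · have hx0 : x < 0 := by linarith
    have hne : x ≠ 0 := ne_of_lt hx0
    rw [fA_T h, Ttilde_left h.le]
    have e : -2 - 1/x = (-2*x - 1)/x := by field_simp; try ring
    rw [e]
    constructor
    · rw [le_div_iff_of_neg hx0]; linarith
    · rw [div_lt_iff_of_neg hx0]; linarith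
  · rcases lt_or_ge x (1/2) with h' | h'
    · rw [fA_S h h']
      rcases lt_trichotomy x 0 with h0 | h0 | h0
      · rw [Stilde_neg h0]; constructor <;> linarith
      · subst h0; rw [Stilde_zero]; constructor <;> norm_num
      · rw [Stilde_pos h0]; constructor <;> linarith
    · have hx0 : (0:ℝ) < x := by linarith
      have hne : x ≠ 0 := ne_of_gt hx0
      rw [fA_Ti h']
      rcases le_or_gt x (1/2) with hm | hm
      · have hd : 3*x - 2 < 0 := by linarith
        rw [Tinv_mid (by linarith) hm]
        constructor
        · rw [le_div_iff_of_neg hd]; linarith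
        · rw [div_lt_iff_of_neg hd]; linarith
      · rw [Tinv_right hm]
        have e : 2 - 1/x = (2*x - 1)/x := by field_simp; try ring
        rw [e]
        constructor
        · rw [le_div_iff₀ hx0]; linarith
        · rw [div_lt_iff₀ hx0]; linarith

lemma fH_mem {x : ℝ} (hx : x ∈ Ico (-1:ℝ) 1) : fH x ∈ Ico (-1:ℝ) 1 := by
  obtain ⟨h1, h2⟩ := hx
  rcases lt_or_ge x (-1/3) with h | h
  · rw [fH_T h]
    rcases le_or_gt x (-1/2) with hm | hm
    · have hx0 : x < 0 := by linarith
      have hne : x ≠ 0 := ne_of_lt hx0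
      rw [Ttilde_left hm]
      have e : -2 - 1/x = (-2*x - 1)/x := by field_simp; try ring
      rw [e]
      constructor
      · rw [le_div_iff_of_neg hx0]; linarith
      · rw [div_lt_iff_of_neg hx0]; linarith
    · have hd : (0:ℝ) < 2 + 3*x := by linarith
      rw [Ttilde_mid hm (by linarith)]
      constructor
      · rw [le_div_iff₀ hd]; linarith
      · rw [div_lt_iff₀ hd]; linarith
  · rcases lt_or_ge x (1/3) with h' | h'
    · rw [fH_S h h']
      rcases lt_trichotomy x 0 with h0 | h0 | h0
      · rw [Stilde_neg h0]; constructor <;> linarith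
      · subst h0; rw [Stilde_zero]; constructor <;> norm_num
      · rw [Stilde_pos h0]; constructor <;> linarith
    · rw [fH_Ti h']
      rcases le_or_gt x (1/2) with hm | hm
      · have hd : 3*x - 2 < 0 := by linarith
        rw [Tinv_mid (by linarith) hm]
        constructor
        · rw [le_div_iff_of_neg hd]; linarith
        · rw [div_lt_iff_of_neg hd]; linarith
      · have hx0 : (0:ℝ) < x := by linarith
        have hne : x ≠ 0 := ne_of_gt hx0
        rw [Tinv_right hm]
        have e : 2 - 1/x = (2*x - 1)/x := by field_simp; try ring
        rw [e]
        constructor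
        · rw [le_div_iff₀ hx0]; linarith
        · rw [div_lt_iff₀ hx0]; linarith


lemma imA1 {s : ℝ} (hs1 : -1 < s) (hs2 : s ≤ -1/2) :
    Ico (-1:ℝ) ((-2*s-1)/s) ⊆ fA '' Ico (-1) s := by
  rintro y ⟨hy1, hy2⟩
  have hs0 : s < 0 := by linarith
  have hy0 : y < 0 := by
    have : (-2*s-1)/s ≤ 0 := by rw [div_le_iff_of_neg hs0]; linarith
    linarith
  have hd : (0:ℝ) < 2 + y := by linarith
  have hys : -2*s-1 < y * s := (lt_div_iff_of_neg hs0).mp hy2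
  have hxs : -1/(2+y) < s := by rw [div_lt_iff₀ hd]; nlinarith
  have hxh : -1/(2+y) < -1/2 := by rw [div_lt_iff₀ hd]; linarith
  refine ⟨-1/(2+y), ⟨?_, hxs⟩, ?_⟩
  · rw [le_div_iff₀ hd]; linarith
  · rw [fA_T hxh, Ttilde_left hxh.le]
    field_simp; ring

lemma imA2 {d : ℝ} (hd1 : -1/2 < d) (hd2 : d ≤ 0) :
    Ico (1/2:ℝ) (d+1) ⊆ fA '' Ico (-1/2) d := by
  rintro y ⟨hy1, hy2⟩
  refine ⟨y - 1, ⟨by linarith, by linarith⟩, ?_⟩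
  rw [fA_S (by linarith) (by linarith), Stilde_neg (by linarith)]
  ring

lemma imA3 {s : ℝ} (hs1 : 1/2 < s) (hs2 : s ≤ 1) :
    Ico (0:ℝ) ((2*s-1)/s) ⊆ fA '' Ico (1/2) s := by
  rintro y ⟨hy1, hy2⟩
  have hs0 : (0:ℝ) < s := by linarith
  have hy1' : y < 1 := by
    have : (2*s-1)/s ≤ 1 := by rw [div_le_iff₀ hs0]; linarith
    linarith
  have hd : (0:ℝ) < 2 - y := by linarith
  have hys : y * s < 2*s - 1 := (lt_div_iff₀ hs0).mp hy2
  have hx1 : (1:ℝ)/2 ≤ 1/(2-y) := by rw [le_div_iff₀ hd]; linarith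
  have hx2 : 1/(2-y) < s := by rw [div_lt_iff₀ hd]; nlinarith
  refine ⟨1/(2-y), ⟨hx1, hx2⟩, ?_⟩
  rw [fA_Ti hx1]
  rcases eq_or_lt_of_le hy1 with h | h
  · rw [show (1:ℝ)/(2-y) = 1/2 by rw [← h]; norm_num, Tinv_mid (by norm_num) (by norm_num)]
    rw [← h]; norm_num
  · have hx3 : (1:ℝ)/2 < 1/(2-y) := by rw [lt_div_iff₀ hd]; linarith
    rw [Tinv_right hx3]
    field_simp; ring

lemma imA4 {u : ℝ} (hu1 : 0 < u) (hu2 : u ≤ 1/2) :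
    Ico (-1:ℝ) (u-1) ⊆ fA '' Ico 0 u := by
  rintro y ⟨hy1, hy2⟩
  refine ⟨y + 1, ⟨by linarith, by linarith⟩, ?_⟩
  rcases eq_or_lt_of_le hy1 with h | h
  · rw [fA_S (by linarith) (by linarith)]
    rw [show y + 1 = 0 by linarith, Stilde_zero]; linarith
  · rw [fA_S (by linarith) (by linarith), Stilde_pos (by linarith)]
    ring

lemma imH1 {s : ℝ} (hs1 : -1 < s) (hs2 : s ≤ -1/2) :
    Ico (-1:ℝ) ((-2*s-1)/s) ⊆ fH '' Ico (-1) s := by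
  rintro y ⟨hy1, hy2⟩
  have hs0 : s < 0 := by linarith
  have hy0 : y < 0 := by
    have : (-2*s-1)/s ≤ 0 := by rw [div_le_iff_of_neg hs0]; linarith
    linarith
  have hd : (0:ℝ) < 2 + y := by linarith
  have hys : -2*s-1 < y * s := (lt_div_iff_of_neg hs0).mp hy2
  have hxs : -1/(2+y) < s := by rw [div_lt_iff₀ hd]; nlinarith
  have hxh : -1/(2+y) < -1/2 := by rw [div_lt_iff₀ hd]; linarith
  refine ⟨-1/(2+y), ⟨?_, hxs⟩, ?_⟩
  · rw [le_div_iff₀ hd]; linarith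
  · rw [fH_T (by linarith), Ttilde_left hxh.le]
    field_simp; ring

lemma imH1' {s : ℝ} (hs1 : -1/2 < s) (hs2 : s ≤ -1/3) :
    Ico (-1:ℝ) ((1+2*s)/(2+3*s)) ⊆ fH '' Ico (-1) s := by
  rintro y ⟨hy1, hy2⟩
  have hds : (0:ℝ) < 2 + 3*s := by linarith
  have hys : y * (2+3*s) < 1 + 2*s := (lt_div_iff₀ hds).mp hy2
  rcases le_or_gt y 0 with hy0 | hy0
  · have hd : (0:ℝ) < 2 + y := by linarith
    have hxh : -1/(2+y) ≤ -1/2 := by rw [div_le_iff₀ hd]; linarith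
    refine ⟨-1/(2+y), ⟨?_, by linarith⟩, ?_⟩
    · rw [le_div_iff₀ hd]; linarith
    · rw [fH_T (by linarith), Ttilde_left hxh]
      field_simp; ring
  · have hd : 3*y - 2 < 0 := by nlinarith
    have hx1 : -1/2 < (1-2*y)/(3*y-2) := by rw [lt_div_iff_of_neg hd]; linarith
    have hx2 : (1-2*y)/(3*y-2) < s := by rw [div_lt_iff_of_neg hd]; nlinarith
    refine ⟨(1-2*y)/(3*y-2), ⟨by linarith, hx2⟩, ?_⟩
    rw [fH_T (by linarith), Ttilde_mid hx1 (by linarith)]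
    rw [div_eq_iff (by rw [ne_eq]; intro h; nlinarith : (2 + 3*((1-2*y)/(3*y-2))) ≠ 0)]
    linear_combination -(div_mul_cancel₀ (1-2*y) (ne_of_lt hd))

lemma imH2 {d : ℝ} (hd1 : -1/3 < d) (hd2 : d ≤ 0) :
    Ico (2/3:ℝ) (d+1) ⊆ fH '' Ico (-1/3) d := by
  rintro y ⟨hy1, hy2⟩
  refine ⟨y - 1, ⟨by linarith, by linarith⟩, ?_⟩
  rw [fH_S (by linarith) (by linarith), Stilde_neg (by linarith)]
  ring

lemma imH3 {s : ℝ} (hs1 : 2/3 < s) (hs2 : s ≤ 1) :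
    Ico (1/2:ℝ) ((2*s-1)/s) ⊆ fH '' Ico (2/3) s := by
  rintro y ⟨hy1, hy2⟩
  have hs0 : (0:ℝ) < s := by linarith
  have hy1' : y < 1 := by
    have : (2*s-1)/s ≤ 1 := by rw [div_le_iff₀ hs0]; linarith
    linarith
  have hd : (0:ℝ) < 2 - y := by linarith
  have hys : y * s < 2*s - 1 := (lt_div_iff₀ hs0).mp hy2
  have hx1 : (2:ℝ)/3 ≤ 1/(2-y) := by rw [le_div_iff₀ hd]; linarith
  have hx2 : 1/(2-y) < s := by rw [div_lt_iff₀ hd]; nlinarith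
  refine ⟨1/(2-y), ⟨hx1, hx2⟩, ?_⟩
  have hx3 : (1:ℝ)/2 < 1/(2-y) := by rw [lt_div_iff₀ hd]; linarith
  rw [fH_Ti (by linarith), Tinv_right hx3]
  field_simp; ring

lemma imH4 {s : ℝ} (hs1 : 1/2 < s) (hs2 : s ≤ 1) :
    Ico (0:ℝ) ((2*s-1)/s) ⊆ fH '' Ico (1/2) s := by
  rintro y ⟨hy1, hy2⟩
  have hs0 : (0:ℝ) < s := by linarith
  have hy1' : y < 1 := by
    have : (2*s-1)/s ≤ 1 := by rw [div_le_iff₀ hs0]; linarith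
    linarith
  have hd : (0:ℝ) < 2 - y := by linarith
  have hys : y * s < 2*s - 1 := (lt_div_iff₀ hs0).mp hy2
  have hx1 : (1:ℝ)/2 ≤ 1/(2-y) := by rw [le_div_iff₀ hd]; linarith
  have hx2 : 1/(2-y) < s := by rw [div_lt_iff₀ hd]; nlinarith
  refine ⟨1/(2-y), ⟨hx1, hx2⟩, ?_⟩
  rw [fH_Ti (by linarith)]
  rcases eq_or_lt_of_le hy1 with h | h
  · rw [show (1:ℝ)/(2-y) = 1/2 by rw [← h]; norm_num, Tinv_mid (by norm_num) (by norm_num)]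
    rw [← h]; norm_num
  · have hx3 : (1:ℝ)/2 < 1/(2-y) := by rw [lt_div_iff₀ hd]; linarith
    rw [Tinv_right hx3]
    field_simp; ring

lemma imH5 {u : ℝ} (hu1 : 0 < u) (hu2 : u ≤ 1/3) :
    Ico (-1:ℝ) (u-1) ⊆ fH '' Ico 0 u := by
  rintro y ⟨hy1, hy2⟩
  refine ⟨y + 1, ⟨by linarith, by linarith⟩, ?_⟩
  rcases eq_or_lt_of_le hy1 with h | h
  · rw [fH_S (by linarith) (by linarith)]
    rw [show y + 1 = 0 by linarith, Stilde_zero]; linarith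
  · rw [fH_S (by linarith) (by linarith), Stilde_pos (by linarith)]
    ring

lemma imH6 {d : ℝ} (hd1 : 1/3 < d) (hd2 : d ≤ 1/2) :
    Ico (-1/3:ℝ) ((1-2*d)/(3*d-2)) ⊆ fH '' Ico (1/3) d := by
  rintro y ⟨hy1, hy2⟩
  have hdd : 3*d - 2 < 0 := by linarith
  have hys : (1-2*d) < y * (3*d-2) := (lt_div_iff_of_neg hdd).mp hy2
  have hy0 : y < 0 := by
    have : (1-2*d)/(3*d-2) ≤ 0 := by rw [div_le_iff_of_neg hdd]; linarith
    linarith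
  have hd : (0:ℝ) < 2 + 3*y := by linarith
  have hx1 : (1:ℝ)/3 ≤ (1+2*y)/(2+3*y) := by rw [le_div_iff₀ hd]; linarith
  have hx2 : (1+2*y)/(2+3*y) < d := by rw [div_lt_iff₀ hd]; nlinarith
  refine ⟨(1+2*y)/(2+3*y), ⟨hx1, hx2⟩, ?_⟩
  rw [fH_Ti hx1, Tinv_mid (by linarith) (le_of_lt (lt_of_lt_of_le hx2 hd2))]
  rw [div_eq_iff (by rw [ne_eq]; intro h; nlinarith [hx2] : (3*((1+2*y)/(2+3*y)) - 2) ≠ 0)]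
  linear_combination -(div_mul_cancel₀ (1+2*y) (ne_of_gt hd))
section D
variable {t s : ℝ}

lemma gainA (ht : -1 < t) (hts : t ≤ s) (hs : s ≤ -1/2) :
    s + (t+1)^2/4 ≤ Ttilde s := by
  have hs0 : s < 0 := by linarith
  rw [Ttilde_left hs, show -2 - 1/s = (-2*s-1)/s by have hne : s ≠ 0 := ne_of_lt hs0; field_simp,
    le_div_iff_of_neg hs0]
  nlinarith [mul_nonneg (by linarith : (0:ℝ) ≤ s+1) (sq_nonneg (t+1)),
    mul_nonneg (by linarith : (0:ℝ) ≤ s-t) (by linarith : (0:ℝ) ≤ s+t+2),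
    sq_nonneg (t+1)]

lemma gainHmid (ht : -1 < t) (hts : t ≤ s) (h1 : -1/2 < s) (h2 : s ≤ -1/3) :
    s + (t+1)^2/4 ≤ Ttilde s := by
  have hd : (0:ℝ) < 2 + 3*s := by linarith
  rw [Ttilde_mid h1 (by linarith), le_div_iff₀ hd]
  have hu9 : (t+1)^2 ≤ 4/9 := by nlinarith
  have hsq : s^2 ≤ 1/4 := by nlinarith
  have h1' : (2+3*s)*((t+1)^2) ≤ (t+1)^2 := by nlinarith [sq_nonneg (t+1)]
  nlinarith [h1', hsq, hu9]

lemma stepA (hs1 : -1 < s) (hs2 : s ≤ -1/2) :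
    Set.Ico (-1:ℝ) (Ttilde s) ⊆ fA '' Set.Ico (-1) s := by
  have hs0 : s < 0 := by linarith
  rw [Ttilde_left hs2, show -2 - 1/s = (-2*s-1)/s by have hne : s ≠ 0 := ne_of_lt hs0; field_simp]
  exact imA1 hs1 hs2

lemma stepH (hs1 : -1 < s) (hs2 : s ≤ -1/3) :
    Set.Ico (-1:ℝ) (Ttilde s) ⊆ fH '' Set.Ico (-1) s := by
  rcases le_or_gt s (-1/2) with h | h
  · have hs0 : s < 0 := by linarith
    rw [Ttilde_left h, show -2 - 1/s = (-2*s-1)/s by have hne : s ≠ 0 := ne_of_lt hs0; field_simp]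
    exact imH1 hs1 h
  · rw [Ttilde_mid h (by linarith)]
    exact imH1' h hs2

lemma TtopA (hs1 : -1 ≤ s) (hs2 : s ≤ -1/2) : Ttilde s ≤ 0 := by
  have hs0 : s < 0 := by linarith
  rw [Ttilde_left hs2, show -2 - 1/s = (-2*s-1)/s by have hne : s ≠ 0 := ne_of_lt hs0; field_simp,
    div_le_iff_of_neg hs0]
  linarith

lemma TtopH (hs1 : -1 ≤ s) (hs2 : s ≤ -1/3) : Ttilde s ≤ 1/3 := by
  rcases le_or_gt s (-1/2) with h | h
  · linarith [TtopA hs1 h]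
  · have hd : (0:ℝ) < 2 + 3*s := by linarith
    rw [Ttilde_mid h (by linarith), div_le_iff₀ hd]
    linarith

lemma escA (ht1 : -1 < t) (ht2 : t ≤ -1/2) :
    ∃ n w, -1/2 < w ∧ w ≤ 0 ∧ Set.Ico (-1:ℝ) w ⊆ fA^[n] '' Set.Ico (-1) t := by
  classical
  have gpos : 0 < (t+1)^2/4 := div_pos (pow_pos (by linarith) 2) (by norm_num)
  have hex : ∃ n, -1/2 < Ttilde^[n] t := by
    by_contra hc
    push_neg at hc
    have key : ∀ n : ℕ, t + n*((t+1)^2/4) ≤ Ttilde^[n] t := by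
      intro n
      induction n with
      | zero => simp
      | succ n ih =>
        have h1 : t ≤ Ttilde^[n] t := by
          have : (0:ℝ) ≤ n * ((t+1)^2/4) := by positivity
          linarith
        have hg := gainA ht1 h1 (hc n)
        rw [Function.iterate_succ_apply']
        push_cast
        linarith
    obtain ⟨n, hn⟩ := exists_nat_gt ((-1/2 - t)/((t+1)^2/4))
    rw [div_lt_iff₀ gpos] at hn
    have := key n
    have := hc n
    linarith
  set N := Nat.find hex with hN
  have hNlt : -1/2 < Ttilde^[N] t := Nat.find_spec hex
  have hbefore : ∀ k, k < N → Ttilde^[k] t ≤ -1/2 :=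
    fun k hk => le_of_not_gt (Nat.find_min hex hk)
  have low : ∀ k, k ≤ N → t ≤ Ttilde^[k] t := by
    intro k
    induction k with
    | zero => intro _; simp
    | succ k ih =>
      intro hk
      have h1 := ih (by omega)
      have h2 := hbefore k (by omega)
      rw [Function.iterate_succ_apply']
      have := gainA ht1 h1 h2
      linarith
  have cov : ∀ k, k ≤ N → Set.Ico (-1:ℝ) (Ttilde^[k] t) ⊆ fA^[k] '' Set.Ico (-1) t := by
    intro k
    induction k with
    | zero => intro _; simp
    | succ k ih =>
      intro hk
      have hsub := ih (by omega)
      have hs1 : -1 < Ttilde^[k] t := lt_of_lt_of_le ht1 (low k (by omega))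
      have hs2 := hbefore k (by omega)
      calc Set.Ico (-1:ℝ) (Ttilde^[k+1] t)
          = Set.Ico (-1:ℝ) (Ttilde (Ttilde^[k] t)) := by rw [Function.iterate_succ_apply']
        _ ⊆ fA '' Set.Ico (-1) (Ttilde^[k] t) := stepA hs1 hs2
        _ ⊆ fA '' (fA^[k] '' Set.Ico (-1) t) := Set.image_mono hsub
        _ = fA^[k+1] '' Set.Ico (-1) t := by
            rw [Function.iterate_succ', Set.image_comp]
  have hN0 : N ≠ 0 := by
    intro h
    rw [h] at hNlt
    simp at hNlt
    linarith
  obtain ⟨M, hM⟩ := Nat.exists_eq_succ_of_ne_zero hN0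
  have wtop : Ttilde^[N] t ≤ 0 := by
    rw [hM, Function.iterate_succ_apply']
    exact TtopA (by linarith [low M (by omega)]) (hbefore M (by omega))
  exact ⟨N, Ttilde^[N] t, hNlt, wtop, cov N le_rfl⟩

lemma escH (ht1 : -1 < t) (ht2 : t ≤ -1/3) :
    ∃ n w, -1/3 < w ∧ w ≤ 1/3 ∧ Set.Ico (-1:ℝ) w ⊆ fH^[n] '' Set.Ico (-1) t := by
  classical
  have gpos : 0 < (t+1)^2/4 := div_pos (pow_pos (by linarith) 2) (by norm_num)
  have gain : ∀ s, t ≤ s → s ≤ -1/3 → s + (t+1)^2/4 ≤ Ttilde s := by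
    intro s h1 h2
    rcases le_or_gt s (-1/2) with h | h
    · exact gainA ht1 h1 h
    · exact gainHmid ht1 h1 h h2
  have hex : ∃ n, -1/3 < Ttilde^[n] t := by
    by_contra hc
    push_neg at hc
    have key : ∀ n : ℕ, t + n*((t+1)^2/4) ≤ Ttilde^[n] t := by
      intro n
      induction n with
      | zero => simp
      | succ n ih =>
        have h1 : t ≤ Ttilde^[n] t := by
          have : (0:ℝ) ≤ n * ((t+1)^2/4) := by positivity
          linarith
        have hg := gain _ h1 (hc n)
        rw [Function.iterate_succ_apply']
        push_cast
        linarith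
    obtain ⟨n, hn⟩ := exists_nat_gt ((-1/3 - t)/((t+1)^2/4))
    rw [div_lt_iff₀ gpos] at hn
    have := key n
    have := hc n
    linarith
  set N := Nat.find hex with hN
  have hNlt : -1/3 < Ttilde^[N] t := Nat.find_spec hex
  have hbefore : ∀ k, k < N → Ttilde^[k] t ≤ -1/3 :=
    fun k hk => le_of_not_gt (Nat.find_min hex hk)
  have low : ∀ k, k ≤ N → t ≤ Ttilde^[k] t := by
    intro k
    induction k with
    | zero => intro _; simp
    | succ k ih =>
      intro hk
      have h1 := ih (by omega)
      have h2 := hbefore k (by omega)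
      rw [Function.iterate_succ_apply']
      have := gain _ h1 h2
      linarith
  have cov : ∀ k, k ≤ N → Set.Ico (-1:ℝ) (Ttilde^[k] t) ⊆ fH^[k] '' Set.Ico (-1) t := by
    intro k
    induction k with
    | zero => intro _; simp
    | succ k ih =>
      intro hk
      have hsub := ih (by omega)
      have hs1 : -1 < Ttilde^[k] t := lt_of_lt_of_le ht1 (low k (by omega))
      have hs2 := hbefore k (by omega)
      calc Set.Ico (-1:ℝ) (Ttilde^[k+1] t)
          = Set.Ico (-1:ℝ) (Ttilde (Ttilde^[k] t)) := by rw [Function.iterate_succ_apply']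
        _ ⊆ fH '' Set.Ico (-1) (Ttilde^[k] t) := stepH hs1 hs2
        _ ⊆ fH '' (fH^[k] '' Set.Ico (-1) t) := Set.image_mono hsub
        _ = fH^[k+1] '' Set.Ico (-1) t := by
            rw [Function.iterate_succ', Set.image_comp]
  have hN0 : N ≠ 0 := by
    intro h
    rw [h] at hNlt
    simp at hNlt
    linarith
  obtain ⟨M, hM⟩ := Nat.exists_eq_succ_of_ne_zero hN0
  have wtop : Ttilde^[N] t ≤ 1/3 := by
    rw [hM, Function.iterate_succ_apply']
    exact TtopH (by linarith [low M (by omega)]) (hbefore M (by omega))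
  exact ⟨N, Ttilde^[N] t, hNlt, wtop, cov N le_rfl⟩

end D
section E

def BdA : Set ℝ := {-1, -1/2, 0, 1/2}
def BdH : Set ℝ := {-1, -1/2, -1/3, 0, 1/3, 1/2}

lemma gapA {x : ℝ} (h1 : -1 < x) (h2 : x < 1) (h3 : x ≠ -1/2) (h4 : x ≠ 0)
    (h5 : x ≠ 1/2) : x ∈ Set.Ico (-1:ℝ) 1 \ BdA := by
  refine ⟨⟨h1.le, h2⟩, ?_⟩
  intro hmem
  simp only [BdA, Set.mem_insert_iff, Set.mem_singleton_iff] at hmem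
  rcases hmem with h|h|h|h
  · linarith
  · exact h3 h
  · exact h4 h
  · exact h5 h

lemma gapH {x : ℝ} (h1 : -1 < x) (h2 : x < 1) (h3 : x ≠ -1/2) (h3' : x ≠ -1/3)
    (h4 : x ≠ 0) (h4' : x ≠ 1/3) (h5 : x ≠ 1/2) : x ∈ Set.Ico (-1:ℝ) 1 \ BdH := by
  refine ⟨⟨h1.le, h2⟩, ?_⟩
  intro hmem
  simp only [BdH, Set.mem_insert_iff, Set.mem_singleton_iff] at hmem
  rcases hmem with h|h|h|h|h|h
  · linarith
  · exact h3 h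
  · exact h3' h
  · exact h4 h
  · exact h4' h
  · exact h5 h

lemma prepend1 {f : ℝ → ℝ} {x : ℝ} {Bd : Set ℝ} (hx : x ∈ Set.Ico (-1:ℝ) 1 \ Bd)
    {N : ℕ} (h : (∀ k < N, f^[k] (f x) ∈ Set.Ico (-1:ℝ) 1 \ Bd) ∧ f^[N] (f x) ∈ Bd) :
    (∀ k < N+1, f^[k] x ∈ Set.Ico (-1:ℝ) 1 \ Bd) ∧ f^[N+1] x ∈ Bd := by
  constructor
  · intro k hk
    cases k with
    | zero => simpa using hx
    | succ k => rw [Function.iterate_succ_apply]; exact h.1 k (by omega)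
  · rw [Function.iterate_succ_apply]; exact h.2

lemma ratA : ∀ (m : ℕ) (a b : ℤ), 0 < b → -b < a → a < b → b.natAbs ≤ m →
    ∃ N : ℕ, (∀ k < N, fA^[k] ((a:ℝ)/(b:ℝ)) ∈ Set.Ico (-1:ℝ) 1 \ BdA) ∧
      fA^[N] ((a:ℝ)/(b:ℝ)) ∈ BdA := by
  intro m
  induction m with
  | zero => intro a b hb _ _ hm; omega
  | succ m IH =>
    intro a b hb hab1 hab2 hm
    have hbR : (0:ℝ) < b := by exact_mod_cast hb
    have hbne : (b:ℝ) ≠ 0 := ne_of_gt hbR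
    have hab1R : -(b:ℝ) < a := by exact_mod_cast hab1
    have hab2R : (a:ℝ) < b := by exact_mod_cast hab2
    have hx1 : -1 < (a:ℝ)/b := by rw [lt_div_iff₀ hbR]; linarith
    have hx2 : (a:ℝ)/b < 1 := by rw [div_lt_iff₀ hbR]; linarith
    by_cases hc1 : 2*a = -b
    · refine ⟨0, by omega, ?_⟩
      have he : (a:ℝ)/b = -1/2 := by
        rw [div_eq_div_iff hbne (by norm_num)]
        have : (2*a:ℝ) = -b := by exact_mod_cast hc1
        linarith
      simp only [Function.iterate_zero_apply, he, BdA]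
      simp
    · by_cases hc2 : a = 0
      · refine ⟨0, by omega, ?_⟩
        simp only [Function.iterate_zero_apply, hc2, BdA]
        simp
      · by_cases hc3 : 2*a = b
        · refine ⟨0, by omega, ?_⟩
          have he : (a:ℝ)/b = 1/2 := by
            rw [div_eq_div_iff hbne (by norm_num)]
            have : (2*a:ℝ) = b := by exact_mod_cast hc3
            linarith
          simp only [Function.iterate_zero_apply, he, BdA]
          simp
        · rcases lt_trichotomy (2*a) (-b) with hpos | hpos | hpos
          · -- case 1 : x ∈ (-1,-1/2)
            have haR : (2*(a:ℝ)) < -b := by exact_mod_cast hpos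
            have ha0 : (a:ℝ) < 0 := by linarith
            have hane : (a:ℝ) ≠ 0 := ne_of_lt ha0
            have hlt : (a:ℝ)/b < -1/2 := by rw [div_lt_iff₀ hbR]; linarith
            have heq : fA ((a:ℝ)/b) = ((2*a+b : ℤ):ℝ)/((-a : ℤ):ℝ) := by
              rw [fA_T hlt, Ttilde_left hlt.le]
              push_cast
              rw [div_neg, one_div_div, neg_eq_iff_eq_neg.symm]
              field_simp
              ring
            obtain ⟨N, hN⟩ := IH (2*a+b) (-a) (by omega) (by omega) (by omega) (by omega)
            rw [← heq] at hN
            have hmem := gapA hx1 hx2 (by intro h; rw [h] at hlt; norm_num at hlt)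
              (by intro h; rw [h] at hlt; norm_num at hlt)
              (by intro h; rw [h] at hlt; norm_num at hlt)
            exact ⟨N+1, (prepend1 hmem ⟨fun k hk => hN.1 k hk, hN.2⟩).1,
              (prepend1 hmem ⟨fun k hk => hN.1 k hk, hN.2⟩).2⟩
          · exact absurd hpos hc1
          · rcases lt_trichotomy a 0 with ha0 | ha0 | ha0
            · -- case 2 : x ∈ (-1/2, 0)
              have haR : -(b:ℝ) < 2*a := by exact_mod_cast hpos
              have ha0R : (a:ℝ) < 0 := by exact_mod_cast ha0
              have hgt : -1/2 < (a:ℝ)/b := by rw [lt_div_iff₀ hbR]; linarith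
              have hlt0 : (a:ℝ)/b < 0 := div_neg_of_neg_of_pos ha0R hbR
              have habpos : (0:ℝ) < (a:ℝ) + b := by linarith
              have habne : ((a:ℝ)+b) ≠ 0 := ne_of_gt habpos
              have heq1 : fA ((a:ℝ)/b) = ((a+b : ℤ):ℝ)/((b : ℤ):ℝ) := by
                rw [fA_S hgt.le (by linarith), Stilde_neg hlt0]
                push_cast
                field_simp
              have hy1 : (1:ℝ)/2 < ((a:ℝ)+b)/b := by rw [lt_div_iff₀ hbR]; linarith
              have hy2 : ((a:ℝ)+b)/b < 1 := by rw [div_lt_iff₀ hbR]; linarith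
              have heq2 : fA (((a+b : ℤ):ℝ)/((b : ℤ):ℝ)) = ((2*a+b : ℤ):ℝ)/((a+b : ℤ):ℝ) := by
                push_cast
                rw [fA_Ti hy1.le, Tinv_right hy1, one_div_div]
                field_simp
                ring
              obtain ⟨N, hN⟩ := IH (2*a+b) (a+b) (by omega) (by omega) (by omega) (by omega)
              rw [← heq2] at hN
              have hmem1 : (((a+b : ℤ):ℝ)/((b : ℤ):ℝ)) ∈ Set.Ico (-1:ℝ) 1 \ BdA := by
                push_cast
                exact gapA (by linarith) hy2 (by intro h; rw [h] at hy1; norm_num at hy1)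
                  (by intro h; rw [h] at hy1; norm_num at hy1)
                  (by intro h; rw [h] at hy1; norm_num at hy1)
              have hN1 := prepend1 hmem1 ⟨fun k hk => hN.1 k hk, hN.2⟩
              rw [← heq1] at hN1
              have hmem := gapA hx1 hx2 (by intro h; rw [h] at hgt; norm_num at hgt)
                (by intro h; rw [h] at hlt0; norm_num at hlt0)
                (by intro h; rw [h] at hlt0; norm_num at hlt0)
              exact ⟨N+1+1, (prepend1 hmem hN1).1, (prepend1 hmem hN1).2⟩
            · exact absurd ha0 hc2
            · rcases lt_trichotomy (2*a) b with hq | hq | hq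
              · -- case 3 : x ∈ (0, 1/2)
                have haR : (0:ℝ) < a := by exact_mod_cast ha0
                have hqR : 2*(a:ℝ) < b := by exact_mod_cast hq
                have hgt0 : (0:ℝ) < (a:ℝ)/b := div_pos haR hbR
                have hlth : (a:ℝ)/b < 1/2 := by rw [div_lt_iff₀ hbR]; linarith
                have heq1 : fA ((a:ℝ)/b) = ((a-b : ℤ):ℝ)/((b : ℤ):ℝ) := by
                  rw [fA_S (by linarith) hlth, Stilde_pos hgt0]
                  push_cast
                  field_simp
                have hy1 : -1 < ((a:ℝ)-b)/b := by rw [lt_div_iff₀ hbR]; linarith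
                have hy2 : ((a:ℝ)-b)/b < -1/2 := by rw [div_lt_iff₀ hbR]; linarith
                have habne : ((a:ℝ)-b) ≠ 0 := by
                  intro h
                  have : (a:ℝ) = b := by linarith
                  linarith
                have hbane : ((b:ℝ)-a) ≠ 0 := by
                  intro h
                  have : (a:ℝ) = b := by linarith
                  linarith
                have heq2 : fA (((a-b : ℤ):ℝ)/((b : ℤ):ℝ)) = ((2*a-b : ℤ):ℝ)/((b-a : ℤ):ℝ) := by
                  push_cast
                  rw [fA_T hy2, Ttilde_left hy2.le, one_div_div]
                  rw [show ((b:ℝ)-a) = -((a:ℝ)-b) by ring, div_neg, neg_eq_iff_eq_neg.symm]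
                  field_simp
                  ring
                obtain ⟨N, hN⟩ := IH (2*a-b) (b-a) (by omega) (by omega) (by omega) (by omega)
                rw [← heq2] at hN
                have hmem1 : (((a-b : ℤ):ℝ)/((b : ℤ):ℝ)) ∈ Set.Ico (-1:ℝ) 1 \ BdA := by
                  push_cast
                  exact gapA hy1 (by linarith) (by intro h; rw [h] at hy2; norm_num at hy2)
                    (by intro h; rw [h] at hy2; norm_num at hy2)
                    (by intro h; rw [h] at hy2; norm_num at hy2)
                have hN1 := prepend1 hmem1 ⟨fun k hk => hN.1 k hk, hN.2⟩
                rw [← heq1] at hN1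
                have hmem := gapA hx1 hx2 (by intro h; rw [h] at hgt0; norm_num at hgt0)
                  (by intro h; rw [h] at hgt0; norm_num at hgt0)
                  (by intro h; rw [h] at hlth; norm_num at hlth)
                exact ⟨N+1+1, (prepend1 hmem hN1).1, (prepend1 hmem hN1).2⟩
              · exact absurd hq hc3
              · -- case 4 : x ∈ (1/2, 1)
                have haR : (0:ℝ) < a := by exact_mod_cast ha0
                have hane : (a:ℝ) ≠ 0 := ne_of_gt haR
                have hqR : (b:ℝ) < 2*a := by exact_mod_cast hq
                have hgth : (1:ℝ)/2 < (a:ℝ)/b := by rw [lt_div_iff₀ hbR]; linarith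
                have heq : fA ((a:ℝ)/b) = ((2*a-b : ℤ):ℝ)/((a : ℤ):ℝ) := by
                  rw [fA_Ti hgth.le, Tinv_right hgth, one_div_div]
                  push_cast
                  field_simp
                obtain ⟨N, hN⟩ := IH (2*a-b) a (by omega) (by omega) (by omega) (by omega)
                rw [← heq] at hN
                have hmem := gapA hx1 hx2 (by intro h; rw [h] at hgth; norm_num at hgth)
                  (by intro h; rw [h] at hgth; norm_num at hgth)
                  (by intro h; rw [h] at hgth; norm_num at hgth)
                exact ⟨N+1, (prepend1 hmem ⟨fun k hk => hN.1 k hk, hN.2⟩).1,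
                  (prepend1 hmem ⟨fun k hk => hN.1 k hk, hN.2⟩).2⟩

end E
section F

lemma ratH : ∀ (m : ℕ) (a b : ℤ), 0 < b → -b < a → a < b → b.natAbs ≤ m →
    ∃ N : ℕ, (∀ k < N, fH^[k] ((a:ℝ)/(b:ℝ)) ∈ Set.Ico (-1:ℝ) 1 \ BdH) ∧
      fH^[N] ((a:ℝ)/(b:ℝ)) ∈ BdH := by
  intro m
  induction m with
  | zero => intro a b hb _ _ hm; omega
  | succ m IH =>
    intro a b hb hab1 hab2 hm
    have hbR : (0:ℝ) < b := by exact_mod_cast hb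
    have hbne : (b:ℝ) ≠ 0 := ne_of_gt hbR
    have hab1R : -(b:ℝ) < a := by exact_mod_cast hab1
    have hab2R : (a:ℝ) < b := by exact_mod_cast hab2
    have hx1 : -1 < (a:ℝ)/b := by rw [lt_div_iff₀ hbR]; linarith
    have hx2 : (a:ℝ)/b < 1 := by rw [div_lt_iff₀ hbR]; linarith
    by_cases hc1 : 2*a = -b
    · refine ⟨0, by omega, ?_⟩
      have he : (a:ℝ)/b = -1/2 := by
        rw [div_eq_div_iff hbne (by norm_num)]
        have : (2*a:ℝ) = -b := by exact_mod_cast hc1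
        linarith
      simp only [Function.iterate_zero_apply, he, BdH]
      simp
    · by_cases hc1' : 3*a = -b
      · refine ⟨0, by omega, ?_⟩
        have he : (a:ℝ)/b = -1/3 := by
          rw [div_eq_div_iff hbne (by norm_num)]
          have : (3*a:ℝ) = -b := by exact_mod_cast hc1'
          linarith
        simp only [Function.iterate_zero_apply, he, BdH]
        simp
      · by_cases hc2 : a = 0
        · refine ⟨0, by omega, ?_⟩
          simp only [Function.iterate_zero_apply, hc2, BdH]
          simp
        · by_cases hc2' : 3*a = b
          · refine ⟨0, by omega, ?_⟩
            have he : (a:ℝ)/b = 1/3 := by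
              rw [div_eq_div_iff hbne (by norm_num)]
              have : (3*a:ℝ) = b := by exact_mod_cast hc2'
              linarith
            simp only [Function.iterate_zero_apply, he, BdH]
            simp
          · by_cases hc3 : 2*a = b
            · refine ⟨0, by omega, ?_⟩
              have he : (a:ℝ)/b = 1/2 := by
                rw [div_eq_div_iff hbne (by norm_num)]
                have : (2*a:ℝ) = b := by exact_mod_cast hc3
                linarith
              simp only [Function.iterate_zero_apply, he, BdH]
              simp
            · rcases lt_trichotomy (2*a) (-b) with hp1 | hp1 | hp1
              · -- H1 : x ∈ (-1,-1/2)
                have haR : (2*(a:ℝ)) < -b := by exact_mod_cast hp1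
                have ha0 : (a:ℝ) < 0 := by linarith
                have hane : (a:ℝ) ≠ 0 := ne_of_lt ha0
                have hlt : (a:ℝ)/b < -1/2 := by rw [div_lt_iff₀ hbR]; linarith
                have heq : fH ((a:ℝ)/b) = ((2*a+b : ℤ):ℝ)/((-a : ℤ):ℝ) := by
                  rw [fH_T (by linarith), Ttilde_left hlt.le]
                  push_cast
                  rw [div_neg, one_div_div, neg_eq_iff_eq_neg.symm]
                  field_simp
                  ring
                obtain ⟨N, hN⟩ := IH (2*a+b) (-a) (by omega) (by omega) (by omega) (by omega)
                rw [← heq] at hN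
                have hmem := gapH hx1 hx2 (by intro h; rw [h] at hlt; norm_num at hlt)
                  (by intro h; rw [h] at hlt; norm_num at hlt)
                  (by intro h; rw [h] at hlt; norm_num at hlt)
                  (by intro h; rw [h] at hlt; norm_num at hlt)
                  (by intro h; rw [h] at hlt; norm_num at hlt)
                exact ⟨N+1, (prepend1 hmem ⟨fun k hk => hN.1 k hk, hN.2⟩).1,
                  (prepend1 hmem ⟨fun k hk => hN.1 k hk, hN.2⟩).2⟩
              · exact absurd hp1 hc1
              · rcases lt_trichotomy (3*a) (-b) with hp2 | hp2 | hp2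
                · -- H2 : x ∈ (-1/2,-1/3)
                  have haR : -(b:ℝ) < 2*a := by exact_mod_cast hp1
                  have ha3R : (3*(a:ℝ)) < -b := by exact_mod_cast hp2
                  have ha0 : (a:ℝ) < 0 := by linarith
                  have hgt : -1/2 < (a:ℝ)/b := by rw [lt_div_iff₀ hbR]; linarith
                  have hlt3 : (a:ℝ)/b < -1/3 := by rw [div_lt_iff₀ hbR]; linarith
                  have hden : (0:ℝ) < 2 + 3*((a:ℝ)/b) := by
                    have : (-1:ℝ)/2 < (a:ℝ)/b := hgt
                    linarith
                  have h32 : (0:ℝ) < 3*(a:ℝ)+2*b := by linarith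
                  have heq : fH ((a:ℝ)/b) = ((2*a+b : ℤ):ℝ)/((3*a+2*b : ℤ):ℝ) := by
                    rw [fH_T hlt3, Ttilde_mid hgt (by linarith)]
                    push_cast
                    rw [div_eq_div_iff (ne_of_gt hden) (ne_of_gt h32)]
                    field_simp
                    ring
                  obtain ⟨N, hN⟩ := IH (2*a+b) (3*a+2*b) (by omega) (by omega) (by omega) (by omega)
                  rw [← heq] at hN
                  have hmem := gapH hx1 hx2 (by intro h; rw [h] at hgt; norm_num at hgt)
                    (by intro h; rw [h] at hlt3; norm_num at hlt3)
                    (by intro h; rw [h] at hlt3; norm_num at hlt3)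
                    (by intro h; rw [h] at hlt3; norm_num at hlt3)
                    (by intro h; rw [h] at hlt3; norm_num at hlt3)
                  exact ⟨N+1, (prepend1 hmem ⟨fun k hk => hN.1 k hk, hN.2⟩).1,
                    (prepend1 hmem ⟨fun k hk => hN.1 k hk, hN.2⟩).2⟩
                · exact absurd hp2 hc1'
                · rcases lt_trichotomy a 0 with ha0 | ha0 | ha0
                  · -- H3 : x ∈ (-1/3, 0)
                    have haR : -(b:ℝ) < 3*a := by exact_mod_cast hp2
                    have ha0R : (a:ℝ) < 0 := by exact_mod_cast ha0
                    have hgt3 : -1/3 < (a:ℝ)/b := by rw [lt_div_iff₀ hbR]; linarith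
                    have hlt0 : (a:ℝ)/b < 0 := div_neg_of_neg_of_pos ha0R hbR
                    have habpos : (0:ℝ) < (a:ℝ) + b := by linarith
                    have habne : ((a:ℝ)+b) ≠ 0 := ne_of_gt habpos
                    have heq1 : fH ((a:ℝ)/b) = ((a+b : ℤ):ℝ)/((b : ℤ):ℝ) := by
                      rw [fH_S hgt3.le (by linarith), Stilde_neg hlt0]
                      push_cast
                      field_simp
                    have hy1 : (2:ℝ)/3 < ((a:ℝ)+b)/b := by rw [lt_div_iff₀ hbR]; linarith
                    have hy2 : ((a:ℝ)+b)/b < 1 := by rw [div_lt_iff₀ hbR]; linarith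
                    have heq2 : fH (((a+b : ℤ):ℝ)/((b : ℤ):ℝ)) = ((2*a+b : ℤ):ℝ)/((a+b : ℤ):ℝ) := by
                      push_cast
                      rw [fH_Ti (by linarith), Tinv_right (by linarith), one_div_div]
                      field_simp
                      ring
                    obtain ⟨N, hN⟩ := IH (2*a+b) (a+b) (by omega) (by omega) (by omega) (by omega)
                    rw [← heq2] at hN
                    have hmem1 : (((a+b : ℤ):ℝ)/((b : ℤ):ℝ)) ∈ Set.Ico (-1:ℝ) 1 \ BdH := by
                      push_cast
                      exact gapH (by linarith) hy2 (by intro h; rw [h] at hy1; norm_num at hy1)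
                        (by intro h; rw [h] at hy1; norm_num at hy1)
                        (by intro h; rw [h] at hy1; norm_num at hy1)
                        (by intro h; rw [h] at hy1; norm_num at hy1)
                        (by intro h; rw [h] at hy1; norm_num at hy1)
                    have hN1 := prepend1 hmem1 ⟨fun k hk => hN.1 k hk, hN.2⟩
                    rw [← heq1] at hN1
                    have hmem := gapH hx1 hx2 (by intro h; rw [h] at hgt3; norm_num at hgt3)
                      (by intro h; rw [h] at hgt3; norm_num at hgt3)
                      (by intro h; rw [h] at hlt0; norm_num at hlt0)
                      (by intro h; rw [h] at hlt0; norm_num at hlt0)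
                      (by intro h; rw [h] at hlt0; norm_num at hlt0)
                    exact ⟨N+1+1, (prepend1 hmem hN1).1, (prepend1 hmem hN1).2⟩
                  · exact absurd ha0 hc2
                  · rcases lt_trichotomy (3*a) b with hq | hq | hq
                    · -- H4 : x ∈ (0, 1/3)
                      have haR : (0:ℝ) < a := by exact_mod_cast ha0
                      have hqR : 3*(a:ℝ) < b := by exact_mod_cast hq
                      have hgt0 : (0:ℝ) < (a:ℝ)/b := div_pos haR hbR
                      have hlth : (a:ℝ)/b < 1/3 := by rw [div_lt_iff₀ hbR]; linarith
                      have heq1 : fH ((a:ℝ)/b) = ((a-b : ℤ):ℝ)/((b : ℤ):ℝ) := by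
                        rw [fH_S (by linarith) hlth, Stilde_pos hgt0]
                        push_cast
                        field_simp
                      have hy1 : -1 < ((a:ℝ)-b)/b := by rw [lt_div_iff₀ hbR]; linarith
                      have hy2 : ((a:ℝ)-b)/b < -1/2 := by rw [div_lt_iff₀ hbR]; linarith
                      have habne : ((a:ℝ)-b) ≠ 0 := by
                        intro h
                        have : (a:ℝ) = b := by linarith
                        linarith
                      have hbane : ((b:ℝ)-a) ≠ 0 := by
                        intro h
                        have : (a:ℝ) = b := by linarith
                        linarith
                      have heq2 : fH (((a-b : ℤ):ℝ)/((b : ℤ):ℝ)) = ((2*a-b : ℤ):ℝ)/((b-a : ℤ):ℝ) := by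
                        push_cast
                        rw [fH_T (by linarith), Ttilde_left hy2.le, one_div_div]
                        rw [show ((b:ℝ)-a) = -((a:ℝ)-b) by ring, div_neg, neg_eq_iff_eq_neg.symm]
                        field_simp
                        ring
                      obtain ⟨N, hN⟩ := IH (2*a-b) (b-a) (by omega) (by omega) (by omega) (by omega)
                      rw [← heq2] at hN
                      have hmem1 : (((a-b : ℤ):ℝ)/((b : ℤ):ℝ)) ∈ Set.Ico (-1:ℝ) 1 \ BdH := by
                        push_cast
                        exact gapH hy1 (by linarith) (by intro h; rw [h] at hy2; norm_num at hy2)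
                          (by intro h; rw [h] at hy2; norm_num at hy2)
                          (by intro h; rw [h] at hy2; norm_num at hy2)
                          (by intro h; rw [h] at hy2; norm_num at hy2)
                          (by intro h; rw [h] at hy2; norm_num at hy2)
                      have hN1 := prepend1 hmem1 ⟨fun k hk => hN.1 k hk, hN.2⟩
                      rw [← heq1] at hN1
                      have hmem := gapH hx1 hx2 (by intro h; rw [h] at hgt0; norm_num at hgt0)
                        (by intro h; rw [h] at hgt0; norm_num at hgt0)
                        (by intro h; rw [h] at hgt0; norm_num at hgt0)
                        (by intro h; rw [h] at hlth; norm_num at hlth)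
                        (by intro h; rw [h] at hlth; norm_num at hlth)
                      exact ⟨N+1+1, (prepend1 hmem hN1).1, (prepend1 hmem hN1).2⟩
                    · exact absurd hq hc2'
                    · rcases lt_trichotomy (2*a) b with hq2 | hq2 | hq2
                      · -- H5 : x ∈ (1/3, 1/2)
                        have haR : (0:ℝ) < a := by exact_mod_cast ha0
                        have hqR : (b:ℝ) < 3*a := by exact_mod_cast hq
                        have hq2R : 2*(a:ℝ) < b := by exact_mod_cast hq2
                        have hgt3 : (1:ℝ)/3 < (a:ℝ)/b := by rw [lt_div_iff₀ hbR]; linarith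
                        have hlth : (a:ℝ)/b < 1/2 := by rw [div_lt_iff₀ hbR]; linarith
                        have hdneg : 3*((a:ℝ)/b) - 2 < 0 := by
                          have : (a:ℝ)/b < 1/2 := hlth
                          linarith
                        have h23 : (0:ℝ) < 2*b - 3*a := by linarith
                        have heq : fH ((a:ℝ)/b) = ((2*a-b : ℤ):ℝ)/((2*b-3*a : ℤ):ℝ) := by
                          rw [fH_Ti hgt3.le, Tinv_mid (by linarith) hlth.le]
                          push_cast
                          rw [div_eq_div_iff (ne_of_lt hdneg) (ne_of_gt h23)]
                          field_simp
                          ring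
                        obtain ⟨N, hN⟩ := IH (2*a-b) (2*b-3*a) (by omega) (by omega) (by omega) (by omega)
                        rw [← heq] at hN
                        have hmem := gapH hx1 hx2 (by intro h; rw [h] at hgt3; norm_num at hgt3)
                          (by intro h; rw [h] at hgt3; norm_num at hgt3)
                          (by intro h; rw [h] at hgt3; norm_num at hgt3)
                          (by intro h; rw [h] at hgt3; norm_num at hgt3)
                          (by intro h; rw [h] at hlth; norm_num at hlth)
                        exact ⟨N+1, (prepend1 hmem ⟨fun k hk => hN.1 k hk, hN.2⟩).1,
                          (prepend1 hmem ⟨fun k hk => hN.1 k hk, hN.2⟩).2⟩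
                      · exact absurd hq2 hc3
                      · -- H6 : x ∈ (1/2, 1)
                        have haR : (0:ℝ) < a := by exact_mod_cast ha0
                        have hane : (a:ℝ) ≠ 0 := ne_of_gt haR
                        have hqR : (b:ℝ) < 2*a := by exact_mod_cast hq2
                        have hgth : (1:ℝ)/2 < (a:ℝ)/b := by rw [lt_div_iff₀ hbR]; linarith
                        have heq : fH ((a:ℝ)/b) = ((2*a-b : ℤ):ℝ)/((a : ℤ):ℝ) := by
                          rw [fH_Ti (by linarith), Tinv_right hgth, one_div_div]
                          push_cast
                          field_simp
                        obtain ⟨N, hN⟩ := IH (2*a-b) a (by omega) (by omega) (by omega) (by omega)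
                        rw [← heq] at hN
                        have hmem := gapH hx1 hx2 (by intro h; rw [h] at hgth; norm_num at hgth)
                          (by intro h; rw [h] at hgth; norm_num at hgth)
                          (by intro h; rw [h] at hgth; norm_num at hgth)
                          (by intro h; rw [h] at hgth; norm_num at hgth)
                          (by intro h; rw [h] at hgth; norm_num at hgth)
                        exact ⟨N+1, (prepend1 hmem ⟨fun k hk => hN.1 k hk, hN.2⟩).1,
                          (prepend1 hmem ⟨fun k hk => hN.1 k hk, hN.2⟩).2⟩

end F
section G

lemma one_div_lt_aux {a b : ℝ} (h : a < b) (hab : 0 < a*b) : 1/b < 1/a := by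
  have ha : a ≠ 0 := by intro h0; rw [h0] at hab; simp at hab
  have hb : b ≠ 0 := by intro h0; rw [h0] at hab; simp at hab
  have e : 1/b - 1/a = (a-b)/(a*b) := by
    rw [div_sub_div _ _ hb ha, one_mul, mul_one, mul_comm b a]
  have h2 := div_neg_of_neg_of_pos (by linarith : a - b < 0) hab
  rw [← e] at h2
  linarith

lemma ivt_step {f : ℝ → ℝ} {x lo hi : ℝ} {U : Set ℝ} (hU : IsOpen U) (hxU : x ∈ U)
    (hlo : lo < x) (hhi : x < hi)
    (hcont : ContinuousOn f (Set.Ioo lo hi))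
    (hmono : StrictMonoOn f (Set.Ioo lo hi)) :
    ∃ c d, c < f x ∧ f x < d ∧ Set.Ioo c d ⊆ f '' U := by
  obtain ⟨ε, hε, hball⟩ := Metric.isOpen_iff.mp hU x hxU
  set a := max ((lo+x)/2) (x - ε/2) with ha
  set b := min ((x+hi)/2) (x + ε/2) with hb
  have hax : a < x := max_lt (by linarith) (by linarith)
  have hxb : x < b := lt_min (by linarith) (by linarith)
  have haIoo : ∀ y, a ≤ y → y ≤ b → y ∈ Set.Ioo lo hi := by
    intro y h1 h2
    constructor
    · have : (lo+x)/2 ≤ a := le_max_left _ _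
      linarith
    · have : b ≤ (x+hi)/2 := min_le_left _ _
      linarith
  have haU : Set.Icc a b ⊆ U := by
    intro y ⟨h1, h2⟩
    apply hball
    rw [Metric.mem_ball, Real.dist_eq, abs_sub_lt_iff]
    have l1 : x - ε/2 ≤ a := le_max_right _ _
    have l2 : b ≤ x + ε/2 := min_le_right _ _
    constructor <;> linarith
  have hsub : Set.Icc a b ⊆ Set.Ioo lo hi := fun y hy => haIoo y hy.1 hy.2
  have hIcc : Set.Icc (f a) (f b) ⊆ f '' Set.Icc a b := by
    apply intermediate_value_Icc (le_of_lt (lt_trans hax hxb))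
    exact hcont.mono hsub
  refine ⟨f a, f b, ?_, ?_, ?_⟩
  · exact hmono (hsub ⟨le_refl a, by linarith⟩) (hsub ⟨by linarith, by linarith⟩) hax
  · exact hmono (hsub ⟨by linarith, by linarith⟩) (hsub ⟨by linarith, le_refl b⟩) hxb
  · intro y hy
    obtain ⟨z, hz, hfz⟩ := hIcc ⟨le_of_lt hy.1, le_of_lt hy.2⟩
    exact ⟨z, haU hz, hfz⟩

lemma notin_BdA {x : ℝ} (hx : x ∈ Set.Ico (-1:ℝ) 1 \ BdA) :
    x ≠ -1 ∧ x ≠ -1/2 ∧ x ≠ 0 ∧ x ≠ 1/2 := by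
  have h := hx.2
  simp only [BdA, Set.mem_insert_iff, Set.mem_singleton_iff] at h
  push_neg at h
  exact h

lemma notin_BdH {x : ℝ} (hx : x ∈ Set.Ico (-1:ℝ) 1 \ BdH) :
    x ≠ -1 ∧ x ≠ -1/2 ∧ x ≠ -1/3 ∧ x ≠ 0 ∧ x ≠ 1/3 ∧ x ≠ 1/2 := by
  have h := hx.2
  simp only [BdH, Set.mem_insert_iff, Set.mem_singleton_iff] at h
  push_neg at h
  exact h

lemma contT1 : ContinuousOn (fun x : ℝ => -2 - 1/x) (Set.Ioo (-1:ℝ) (-1/2)) := by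
  apply ContinuousOn.sub continuousOn_const
  apply ContinuousOn.div continuousOn_const continuousOn_id
  intro x hx
  exact ne_of_lt (lt_trans hx.2 (by norm_num))

lemma monoT1 : StrictMonoOn (fun x : ℝ => -2 - 1/x) (Set.Ioo (-1:ℝ) (-1/2)) := by
  intro p hp q hq hpq
  have : 1/q < 1/p := one_div_lt_aux hpq
    (mul_pos_of_neg_of_neg (lt_trans hp.2 (by norm_num)) (lt_trans hq.2 (by norm_num)))
  simp only
  linarith

lemma contTinv3 : ContinuousOn (fun x : ℝ => 2 - 1/x) (Set.Ioo (1/2:ℝ) 1) := by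
  apply ContinuousOn.sub continuousOn_const
  apply ContinuousOn.div continuousOn_const continuousOn_id
  intro x hx
  exact ne_of_gt (lt_trans (by norm_num) hx.1)

lemma monoTinv3 : StrictMonoOn (fun x : ℝ => 2 - 1/x) (Set.Ioo (1/2:ℝ) 1) := by
  intro p hp q hq hpq
  have : 1/q < 1/p := one_div_lt_aux hpq
    (mul_pos (lt_trans (by norm_num) hp.1) (lt_trans (by norm_num) hq.1))
  simp only
  linarith

lemma contT2 : ContinuousOn (fun x : ℝ => (1+2*x)/(2+3*x)) (Set.Ioo (-1/2:ℝ) (-1/3)) := by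
  apply ContinuousOn.div
  · fun_prop
  · fun_prop
  · intro x hx h0
    have h1 : -1/2 < x := hx.1
    linarith

lemma monoT2 : StrictMonoOn (fun x : ℝ => (1+2*x)/(2+3*x)) (Set.Ioo (-1/2:ℝ) (-1/3)) := by
  intro p hp q hq hpq
  have hp1 : (0:ℝ) < 2+3*p := by have := hp.1; linarith
  have hq1 : (0:ℝ) < 2+3*q := by have := hq.1; linarith
  simp only
  rw [div_lt_div_iff₀ hp1 hq1]
  nlinarith

lemma contTinv2 : ContinuousOn (fun x : ℝ => (1-2*x)/(3*x-2)) (Set.Ioo (1/3:ℝ) (1/2)) := by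
  apply ContinuousOn.div
  · fun_prop
  · fun_prop
  · intro x hx h0
    have h1 : x < 1/2 := hx.2
    linarith

lemma monoTinv2 : StrictMonoOn (fun x : ℝ => (1-2*x)/(3*x-2)) (Set.Ioo (1/3:ℝ) (1/2)) := by
  intro p hp q hq hpq
  have e : ∀ x : ℝ, (1-2*x)/(3*x-2) = (2*x-1)/(2-3*x) := by
    intro x
    rw [show (1-2*x) = -(2*x-1) by ring, show (3*x-2) = -(2-3*x) by ring, neg_div_neg_eq]
  have hp1 : (0:ℝ) < 2-3*p := by have := hp.2; linarith
  have hq1 : (0:ℝ) < 2-3*q := by have := hq.2; linarith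
  simp only [e]
  rw [div_lt_div_iff₀ hp1 hq1]
  nlinarith

lemma openA {x : ℝ} (hx : x ∈ Set.Ico (-1:ℝ) 1 \ BdA) {U : Set ℝ} (hU : IsOpen U)
    (hxU : x ∈ U) : ∃ c d, c < fA x ∧ fA x < d ∧ Set.Ioo c d ⊆ fA '' U := by
  obtain ⟨hn1, hn2, hn3, hn4⟩ := notin_BdA hx
  obtain ⟨⟨hxl, hxr⟩, -⟩ := hx
  have hxl' : -1 < x := lt_of_le_of_ne hxl (Ne.symm hn1)
  rcases lt_or_ge x (-1/2) with h | h
  · have heqon : ∀ y ∈ Set.Ioo (-1:ℝ) (-1/2), fA y = -2 - 1/y := by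
      intro y hy
      rw [fA_T hy.2, Ttilde_left hy.2.le]
    obtain ⟨c, d, h1, h2, h3⟩ := ivt_step hU hxU hxl' h
      (contT1.congr heqon) (fun p hp q hq hpq => by
        rw [heqon p hp, heqon q hq]; exact monoT1 hp hq hpq)
    exact ⟨c, d, h1, h2, h3⟩
  · have h' : -1/2 < x := lt_of_le_of_ne h (Ne.symm hn2)
    rcases lt_trichotomy x 0 with h0 | h0 | h0
    · have heqon : ∀ y ∈ Set.Ioo (-1/2:ℝ) 0, fA y = y + 1 := by
        intro y hy
        rw [fA_S hy.1.le (by nlinarith [hy.2]), Stilde_neg hy.2]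
      obtain ⟨c, d, h1, h2, h3⟩ := ivt_step hU hxU h' h0
        ((continuous_id.add continuous_const).continuousOn.congr heqon)
        (fun p hp q hq hpq => by rw [heqon p hp, heqon q hq]; simpa using hpq)
      exact ⟨c, d, h1, h2, h3⟩
    · exact absurd h0 hn3
    · rcases lt_or_ge x (1/2) with hh | hh
      · have heqon : ∀ y ∈ Set.Ioo (0:ℝ) (1/2), fA y = y - 1 := by
          intro y hy
          rw [fA_S (by nlinarith [hy.1]) hy.2, Stilde_pos hy.1]
        obtain ⟨c, d, h1, h2, h3⟩ := ivt_step hU hxU h0 hh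
          ((continuous_id.sub continuous_const).continuousOn.congr heqon)
          (fun p hp q hq hpq => by rw [heqon p hp, heqon q hq]; simpa using hpq)
        exact ⟨c, d, h1, h2, h3⟩
      · have hh' : 1/2 < x := lt_of_le_of_ne hh (Ne.symm hn4)
        have heqon : ∀ y ∈ Set.Ioo (1/2:ℝ) 1, fA y = 2 - 1/y := by
          intro y hy
          rw [fA_Ti hy.1.le, Tinv_right hy.1]
        obtain ⟨c, d, h1, h2, h3⟩ := ivt_step hU hxU hh' hxr
          (contTinv3.congr heqon) (fun p hp q hq hpq => by
            rw [heqon p hp, heqon q hq]; exact monoTinv3 hp hq hpq)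
        exact ⟨c, d, h1, h2, h3⟩

lemma openH {x : ℝ} (hx : x ∈ Set.Ico (-1:ℝ) 1 \ BdH) {U : Set ℝ} (hU : IsOpen U)
    (hxU : x ∈ U) : ∃ c d, c < fH x ∧ fH x < d ∧ Set.Ioo c d ⊆ fH '' U := by
  obtain ⟨hn1, hn2, hn2', hn3, hn4', hn4⟩ := notin_BdH hx
  obtain ⟨⟨hxl, hxr⟩, -⟩ := hx
  have hxl' : -1 < x := lt_of_le_of_ne hxl (Ne.symm hn1)
  rcases lt_or_ge x (-1/2) with h | h
  · have heqon : ∀ y ∈ Set.Ioo (-1:ℝ) (-1/2), fH y = -2 - 1/y := by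
      intro y hy
      rw [fH_T (by linarith [hy.2]), Ttilde_left hy.2.le]
    obtain ⟨c, d, h1, h2, h3⟩ := ivt_step hU hxU hxl' h
      (contT1.congr heqon) (fun p hp q hq hpq => by
        rw [heqon p hp, heqon q hq]; exact monoT1 hp hq hpq)
    exact ⟨c, d, h1, h2, h3⟩
  · have h' : -1/2 < x := lt_of_le_of_ne h (Ne.symm hn2)
    rcases lt_or_ge x (-1/3) with hm | hm
    · have heqon : ∀ y ∈ Set.Ioo (-1/2:ℝ) (-1/3), fH y = (1+2*y)/(2+3*y) := by
        intro y hy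
        rw [fH_T hy.2, Ttilde_mid hy.1 (by linarith [hy.2])]
      obtain ⟨c, d, h1, h2, h3⟩ := ivt_step hU hxU h' hm
        (contT2.congr heqon) (fun p hp q hq hpq => by
          rw [heqon p hp, heqon q hq]; exact monoT2 hp hq hpq)
      exact ⟨c, d, h1, h2, h3⟩
    · have hm' : -1/3 < x := lt_of_le_of_ne hm (Ne.symm hn2')
      rcases lt_trichotomy x 0 with h0 | h0 | h0
      · have heqon : ∀ y ∈ Set.Ioo (-1/3:ℝ) 0, fH y = y + 1 := by
          intro y hy
          rw [fH_S hy.1.le (by nlinarith [hy.2]), Stilde_neg hy.2]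
        obtain ⟨c, d, h1, h2, h3⟩ := ivt_step hU hxU hm' h0
          ((continuous_id.add continuous_const).continuousOn.congr heqon)
          (fun p hp q hq hpq => by rw [heqon p hp, heqon q hq]; simpa using hpq)
        exact ⟨c, d, h1, h2, h3⟩
      · exact absurd h0 hn3
      · rcases lt_or_ge x (1/3) with hh | hh
        · have heqon : ∀ y ∈ Set.Ioo (0:ℝ) (1/3), fH y = y - 1 := by
            intro y hy
            rw [fH_S (by nlinarith [hy.1]) hy.2, Stilde_pos hy.1]
          obtain ⟨c, d, h1, h2, h3⟩ := ivt_step hU hxU h0 hh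
            ((continuous_id.sub continuous_const).continuousOn.congr heqon)
            (fun p hp q hq hpq => by rw [heqon p hp, heqon q hq]; simpa using hpq)
          exact ⟨c, d, h1, h2, h3⟩
        · have hh' : 1/3 < x := lt_of_le_of_ne hh (Ne.symm hn4')
          rcases lt_or_ge x (1/2) with hi | hi
          · have heqon : ∀ y ∈ Set.Ioo (1/3:ℝ) (1/2), fH y = (1-2*y)/(3*y-2) := by
              intro y hy
              rw [fH_Ti hy.1.le, Tinv_mid (by linarith [hy.1]) hy.2.le]
            obtain ⟨c, d, h1, h2, h3⟩ := ivt_step hU hxU hh' hi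
              (contTinv2.congr heqon) (fun p hp q hq hpq => by
                rw [heqon p hp, heqon q hq]; exact monoTinv2 hp hq hpq)
            exact ⟨c, d, h1, h2, h3⟩
          · have hi' : 1/2 < x := lt_of_le_of_ne hi (Ne.symm hn4)
            have heqon : ∀ y ∈ Set.Ioo (1/2:ℝ) 1, fH y = 2 - 1/y := by
              intro y hy
              rw [fH_Ti (by linarith [hy.1]), Tinv_right hy.1]
            obtain ⟨c, d, h1, h2, h3⟩ := ivt_step hU hxU hi' hxr
              (contTinv3.congr heqon) (fun p hp q hq hpq => by
                rw [heqon p hp, heqon q hq]; exact monoTinv3 hp hq hpq)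
            exact ⟨c, d, h1, h2, h3⟩

lemma iterOpen {f : ℝ → ℝ} {Bd : Set ℝ}
    (hopen : ∀ (x : ℝ) (U : Set ℝ), x ∈ Set.Ico (-1:ℝ) 1 \ Bd → IsOpen U → x ∈ U →
      ∃ c d, c < f x ∧ f x < d ∧ Set.Ioo c d ⊆ f '' U) :
    ∀ (N : ℕ) (x : ℝ) (U : Set ℝ), IsOpen U → x ∈ U →
      (∀ k < N, f^[k] x ∈ Set.Ico (-1:ℝ) 1 \ Bd) →
      ∃ c d, c < f^[N] x ∧ f^[N] x < d ∧ Set.Ioo c d ⊆ f^[N] '' U := by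
  intro N
  induction N with
  | zero =>
    intro x U hU hxU _
    obtain ⟨ε, hε, hball⟩ := Metric.isOpen_iff.mp hU x hxU
    refine ⟨x - ε, x + ε, by simpa using hε, by simpa using hε, ?_⟩
    simp only [Function.iterate_zero, Function.iterate_zero_apply, Set.image_id', Set.image_id]
    rw [← Real.ball_eq_Ioo]
    exact hball
  | succ N ih =>
    intro x U hU hxU hbd
    have hx0 : x ∈ Set.Ico (-1:ℝ) 1 \ Bd := by
      have := hbd 0 (by omega)
      simpa using this
    obtain ⟨c, d, h1, h2, hsub⟩ := hopen x U hx0 hU hxU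
    obtain ⟨c', d', g1, g2, gsub⟩ := ih (f x) (Set.Ioo c d) isOpen_Ioo ⟨h1, h2⟩
      (fun k hk => by
        rw [← Function.iterate_succ_apply]
        exact hbd (k+1) (by omega))
    refine ⟨c', d', by rw [Function.iterate_succ_apply]; exact g1,
      by rw [Function.iterate_succ_apply]; exact g2, ?_⟩
    calc Set.Ioo c' d' ⊆ f^[N] '' Set.Ioo c d := gsub
      _ ⊆ f^[N] '' (f '' U) := Set.image_mono hsub
      _ = f^[N+1] '' U := by rw [Function.iterate_succ, Set.image_comp]

end G
section H

lemma imG1 {d : ℝ} (hd1 : -1/2 < d) (hd2 : d ≤ -1/3) :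
    Set.Ico (0:ℝ) ((1+2*d)/(2+3*d)) ⊆ fH '' Set.Ico (-1/2) d := by
  rintro y ⟨hy1, hy2⟩
  have hdd : (0:ℝ) < 2 + 3*d := by linarith
  have hys : y * (2+3*d) < 1+2*d := (lt_div_iff₀ hdd).mp hy2
  have hy3 : y < 1/3 := by nlinarith
  have hd3 : 3*y - 2 < 0 := by linarith
  have hx1 : -1/2 ≤ (1-2*y)/(3*y-2) := by rw [le_div_iff_of_neg hd3]; linarith
  have hx2 : (1-2*y)/(3*y-2) < d := by rw [div_lt_iff_of_neg hd3]; nlinarith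
  refine ⟨(1-2*y)/(3*y-2), ⟨hx1, hx2⟩, ?_⟩
  rw [fH_T (by linarith)]
  rcases eq_or_lt_of_le hy1 with h | h
  · rw [show (1-2*y)/(3*y-2) = -1/2 by rw [← h]; norm_num, Ttilde_left (by norm_num)]
    rw [← h]; norm_num
  · have hx1' : -1/2 < (1-2*y)/(3*y-2) := by rw [lt_div_iff_of_neg hd3]; linarith
    rw [Ttilde_mid hx1' (by linarith)]
    rw [div_eq_iff (by rw [ne_eq]; intro hcon; nlinarith [hx1'] :
      (2 + 3*((1-2*y)/(3*y-2))) ≠ 0)]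
    linear_combination -(div_mul_cancel₀ (1-2*y) (ne_of_lt hd3))

lemma stepup {f : ℝ → ℝ} {U A B : Set ℝ} {n : ℕ} (h1 : B ⊆ f '' A)
    (h2 : A ⊆ f^[n] '' U) : B ⊆ f^[n+1] '' U := by
  calc B ⊆ f '' A := h1
    _ ⊆ f '' (f^[n] '' U) := Set.image_mono h2
    _ = f^[n+1] '' U := by rw [Function.iterate_succ', Set.image_comp]

lemma iter_mem {f : ℝ → ℝ} (hf : ∀ x ∈ Set.Ico (-1:ℝ) 1, f x ∈ Set.Ico (-1:ℝ) 1)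
    {U : Set ℝ} (hU : U ⊆ Set.Ico (-1:ℝ) 1) (n : ℕ) :
    f^[n] '' U ⊆ Set.Ico (-1:ℝ) 1 := by
  induction n with
  | zero => simpa using hU
  | succ n ih =>
    rw [Function.iterate_succ', Set.image_comp]
    rintro y ⟨z, hz, rfl⟩
    exact hf z (ih hz)

lemma anchorIco {S : Set ℝ} {c d p e : ℝ} (hS : Set.Ioo c d ⊆ S) (hp : p ∈ S)
    (hcp : c < p) (hpe : p < e) (hed : e ≤ d) : Set.Ico p e ⊆ S := by
  rintro y ⟨h1, h2⟩
  rcases eq_or_lt_of_le h1 with h | h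
  · rwa [← h]
  · exact hS ⟨lt_trans hcp h, lt_of_lt_of_le h2 hed⟩

lemma fromS1A {U : Set ℝ} {t : ℝ} (ht1 : -1 < t) (ht2 : t ≤ -1/2) {n : ℕ}
    (h : Set.Ico (-1:ℝ) t ⊆ fA^[n] '' U) :
    ∃ m, Set.Ico (-1:ℝ) 1 ⊆ fA^[m] '' U := by
  obtain ⟨k, w, hw1, hw2, hcov⟩ := escA ht1 ht2
  have h1 : Set.Ico (-1:ℝ) w ⊆ fA^[k+n] '' U := by
    calc Set.Ico (-1:ℝ) w ⊆ fA^[k] '' Set.Ico (-1) t := hcov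
      _ ⊆ fA^[k] '' (fA^[n] '' U) := Set.image_mono h
      _ = fA^[k+n] '' U := by rw [Function.iterate_add, Set.image_comp]
  have hAw : Set.Ico (-1:ℝ) (-1/2) ⊆ fA^[k+n] '' U :=
    fun y hy => h1 ⟨hy.1, by linarith [hy.2]⟩
  have c1 : Set.Ico (-1:ℝ) 0 ⊆ fA '' Set.Ico (-1) (-1/2) := by
    have := stepA (by norm_num : (-1:ℝ) < -1/2) (le_refl (-1/2 : ℝ))
    rwa [show Ttilde (-1/2 : ℝ) = 0 by rw [Ttilde_left (le_refl _)]; norm_num] at this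
  have c2 : Set.Ico (-1:ℝ) 0 ⊆ fA '' Set.Ico (-1) 0 :=
    c1.trans (Set.image_mono (fun y hy => ⟨hy.1, by linarith [hy.2]⟩))
  have c3 : Set.Ico (1/2:ℝ) 1 ⊆ fA '' Set.Ico (-1) 0 := by
    have := imA2 (by norm_num : (-1:ℝ)/2 < 0) (le_refl (0:ℝ))
    rw [show (0:ℝ)+1 = 1 by norm_num] at this
    exact this.trans (Set.image_mono (fun y hy => ⟨by linarith [hy.1], hy.2⟩))
  have c4 : Set.Ico (0:ℝ) 1 ⊆ fA '' Set.Ico (1/2) 1 := by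
    have := imA3 (by norm_num : (1:ℝ)/2 < 1) (le_refl (1:ℝ))
    rwa [show (2*(1:ℝ)-1)/1 = 1 by norm_num] at this
  have hM1 := stepup c1 hAw
  have hM2 := stepup c2 hM1
  have hM3 := stepup c2 hM2
  have hD2 := stepup c3 hM1
  have hC3 := stepup c4 hD2
  refine ⟨k+n+1+1+1, fun y hy => ?_⟩
  rcases lt_or_ge y 0 with h0 | h0
  · exact hM3 ⟨hy.1, h0⟩
  · exact hC3 ⟨h0, hy.2⟩

lemma fromS1H {U : Set ℝ} {t : ℝ} (ht1 : -1 < t) (ht2 : t ≤ -1/3) {n : ℕ}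
    (h : Set.Ico (-1:ℝ) t ⊆ fH^[n] '' U) :
    ∃ m, Set.Ico (-1:ℝ) 1 ⊆ fH^[m] '' U := by
  obtain ⟨k, w, hw1, hw2, hcov⟩ := escH ht1 ht2
  have h1 : Set.Ico (-1:ℝ) w ⊆ fH^[k+n] '' U := by
    calc Set.Ico (-1:ℝ) w ⊆ fH^[k] '' Set.Ico (-1) t := hcov
      _ ⊆ fH^[k] '' (fH^[n] '' U) := Set.image_mono h
      _ = fH^[k+n] '' U := by rw [Function.iterate_add, Set.image_comp]
  have hAw : Set.Ico (-1:ℝ) (-1/3) ⊆ fH^[k+n] '' U :=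
    fun y hy => h1 ⟨hy.1, by linarith [hy.2]⟩
  have c1 : Set.Ico (-1:ℝ) (1/3) ⊆ fH '' Set.Ico (-1) (-1/3) := by
    have := stepH (by norm_num : (-1:ℝ) < -1/3) (le_refl (-1/3 : ℝ))
    rwa [show Ttilde (-1/3 : ℝ) = 1/3 by
      rw [Ttilde_mid (by norm_num) (by norm_num)]; norm_num] at this
  have c2 : Set.Ico (-1:ℝ) (1/3) ⊆ fH '' Set.Ico (-1) (1/3) :=
    c1.trans (Set.image_mono (fun y hy => ⟨hy.1, by linarith [hy.2]⟩))
  have c3 : Set.Ico (2/3:ℝ) 1 ⊆ fH '' Set.Ico (-1) (1/3) := by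
    have := imH2 (by norm_num : (-1:ℝ)/3 < 0) (le_refl (0:ℝ))
    rw [show (0:ℝ)+1 = 1 by norm_num] at this
    exact this.trans (Set.image_mono
      (fun y hy => ⟨by linarith [hy.1], by linarith [hy.2]⟩))
  have c4 : Set.Ico (1/2:ℝ) 1 ⊆ fH '' Set.Ico (2/3) 1 := by
    have := imH3 (by norm_num : (2:ℝ)/3 < 1) (le_refl (1:ℝ))
    rwa [show (2*(1:ℝ)-1)/1 = 1 by norm_num] at this
  have c5 : Set.Ico (0:ℝ) 1 ⊆ fH '' Set.Ico (1/2) 1 := by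
    have := imH4 (by norm_num : (1:ℝ)/2 < 1) (le_refl (1:ℝ))
    rwa [show (2*(1:ℝ)-1)/1 = 1 by norm_num] at this
  have hM1 := stepup c1 hAw
  have hM2 := stepup c2 hM1
  have hM3 := stepup c2 hM2
  have hM4 := stepup c2 hM3
  have hD1 := stepup c3 hM1
  have hD2 := stepup c4 hD1
  have hC3 := stepup c5 hD2
  refine ⟨k+n+1+1+1+1, fun y hy => ?_⟩
  rcases lt_or_ge y 0 with h0 | h0
  · exact hM4 ⟨hy.1, by linarith⟩
  · exact hC3 ⟨h0, hy.2⟩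

end H
section I

lemma funnelA {U : Set ℝ} {N : ℕ} {p c d : ℝ} (hS : Set.Ioo c d ⊆ fA^[N] '' U)
    (hpS : p ∈ fA^[N] '' U) (hc : c < p) (hd : p < d) (hp : p ∈ BdA) (hne : p ≠ -1) :
    ∃ m, Set.Ico (-1:ℝ) 1 ⊆ fA^[m] '' U := by
  simp only [BdA, Set.mem_insert_iff, Set.mem_singleton_iff] at hp
  rcases hp with rfl | rfl | rfl | rfl
  · exact absurd rfl hne
  · set e := min d (-1/3 : ℝ) with he
    have he1 : -1/2 < e := lt_min hd (by norm_num)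
    have he2 : e ≤ -1/3 := min_le_right _ _
    have base := anchorIco hS hpS hc he1 (min_le_left _ _)
    have l1 := stepup (imA2 he1 (by linarith)) base
    have hu1a : (1:ℝ)/2 < e + 1 := by linarith
    have l2 := stepup (imA3 hu1a (by linarith)) l1
    set u2 := (2*(e+1)-1)/(e+1) with hu2
    have hu2a : 0 < u2 := div_pos (by linarith) (by linarith)
    have hu2b : u2 ≤ 1/2 := by
      rw [hu2, div_le_iff₀ (by linarith : (0:ℝ) < e + 1)]; linarith
    have l3 := stepup (imA4 hu2a hu2b) l2
    exact fromS1A (by linarith) (by linarith) l3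
  · set e := min d (1/2 : ℝ) with he
    have he1 : (0:ℝ) < e := lt_min hd (by norm_num)
    have he2 : e ≤ 1/2 := min_le_right _ _
    have base := anchorIco hS hpS hc he1 (min_le_left _ _)
    have l1 := stepup (imA4 he1 he2) base
    exact fromS1A (by linarith) (by linarith) l1
  · set e := min d (2/3 : ℝ) with he
    have he1 : (1:ℝ)/2 < e := lt_min hd (by norm_num)
    have he2 : e ≤ 2/3 := min_le_right _ _
    have base := anchorIco hS hpS hc he1 (min_le_left _ _)
    have l2 := stepup (imA3 he1 (by linarith)) base
    set u2 := (2*e-1)/e with hu2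
    have hu2a : 0 < u2 := div_pos (by linarith) (by linarith)
    have hu2b : u2 ≤ 1/2 := by
      rw [hu2, div_le_iff₀ (by linarith : (0:ℝ) < e)]; linarith
    have l3 := stepup (imA4 hu2a hu2b) l2
    exact fromS1A (by linarith) (by linarith) l3

lemma chainH_B {U : Set ℝ} {n : ℕ} {e : ℝ} (he1 : -1/3 < e) (he2 : e ≤ -2/7)
    (h : Set.Ico (-1/3:ℝ) e ⊆ fH^[n] '' U) :
    ∃ m, Set.Ico (-1:ℝ) 1 ⊆ fH^[m] '' U := by
  have l1 := stepup (imH2 he1 (by linarith)) h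
  have hu1a : (2:ℝ)/3 < e + 1 := by linarith
  have l2 := stepup (imH3 hu1a (by linarith)) l1
  set u2 := (2*(e+1)-1)/(e+1) with hu2
  have hu1pos : (0:ℝ) < e + 1 := by linarith
  have hu2a : (1:ℝ)/2 < u2 := by
    rw [hu2, lt_div_iff₀ hu1pos]; linarith
  have hu2b : u2 ≤ 3/5 := by
    rw [hu2, div_le_iff₀ hu1pos]; linarith
  have l3 := stepup (imH4 hu2a (by linarith)) l2
  set u3 := (2*u2-1)/u2 with hu3
  have hu3a : 0 < u3 := div_pos (by linarith) (by linarith)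
  have hu3b : u3 ≤ 1/3 := by
    rw [hu3, div_le_iff₀ (by linarith : (0:ℝ) < u2)]; linarith
  have l4 := stepup (imH5 hu3a hu3b) l3
  exact fromS1H (by linarith) (by linarith) l4

lemma funnelH {U : Set ℝ} {N : ℕ} {p c d : ℝ} (hS : Set.Ioo c d ⊆ fH^[N] '' U)
    (hpS : p ∈ fH^[N] '' U) (hc : c < p) (hd : p < d) (hp : p ∈ BdH) (hne : p ≠ -1) :
    ∃ m, Set.Ico (-1:ℝ) 1 ⊆ fH^[m] '' U := by
  simp only [BdH, Set.mem_insert_iff, Set.mem_singleton_iff] at hp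
  rcases hp with rfl | rfl | rfl | rfl | rfl | rfl
  · exact absurd rfl hne
  · -- p = -1/2
    set e := min d (-1/3 : ℝ) with he
    have he1 : -1/2 < e := lt_min hd (by norm_num)
    have he2 : e ≤ -1/3 := min_le_right _ _
    have base := anchorIco hS hpS hc he1 (min_le_left _ _)
    have l1 := stepup (imG1 he1 he2) base
    set u := (1+2*e)/(2+3*e) with hu
    have hepos : (0:ℝ) < 2 + 3*e := by linarith
    have hua : 0 < u := div_pos (by linarith) hepos
    have hub : u ≤ 1/3 := by
      rw [hu, div_le_iff₀ hepos]; linarith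
    have l2 := stepup (imH5 hua hub) l1
    exact fromS1H (by linarith) (by linarith) l2
  · -- p = -1/3
    set e := min d (-2/7 : ℝ) with he
    have he1 : -1/3 < e := lt_min hd (by norm_num)
    have he2 : e ≤ -2/7 := min_le_right _ _
    have base := anchorIco hS hpS hc he1 (min_le_left _ _)
    exact chainH_B he1 he2 base
  · -- p = 0
    set e := min d (1/3 : ℝ) with he
    have he1 : (0:ℝ) < e := lt_min hd (by norm_num)
    have he2 : e ≤ 1/3 := min_le_right _ _
    have base := anchorIco hS hpS hc he1 (min_le_left _ _)
    have l1 := stepup (imH5 he1 he2) base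
    exact fromS1H (by linarith) (by linarith) l1
  · -- p = 1/3
    set e := min d (3/8 : ℝ) with he
    have he1 : (1:ℝ)/3 < e := lt_min hd (by norm_num)
    have he2 : e ≤ 3/8 := min_le_right _ _
    have base := anchorIco hS hpS hc he1 (min_le_left _ _)
    have l0 := stepup (imH6 he1 (by linarith)) base
    set v := (1-2*e)/(3*e-2) with hv
    have heneg : 3*e - 2 < 0 := by linarith
    have hva : -1/3 < v := by
      rw [hv, lt_div_iff_of_neg heneg]; linarith
    have hvb : v ≤ -2/7 := by
      rw [hv, div_le_iff_of_neg heneg]; linarith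
    exact chainH_B hva hvb l0
  · -- p = 1/2
    set e := min d (3/5 : ℝ) with he
    have he1 : (1:ℝ)/2 < e := lt_min hd (by norm_num)
    have he2 : e ≤ 3/5 := min_le_right _ _
    have base := anchorIco hS hpS hc he1 (min_le_left _ _)
    have l1 := stepup (imH4 he1 (by linarith)) base
    set u := (2*e-1)/e with hu
    have hua : 0 < u := div_pos (by linarith) (by linarith)
    have hub : u ≤ 1/3 := by
      rw [hu, div_le_iff₀ (by linarith : (0:ℝ) < e)]; linarith
    have l2 := stepup (imH5 hua hub) l1
    exact fromS1H (by linarith) (by linarith) l2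

end I
section J

lemma fullA {U : Set ℝ} (hU : ∃ O : Set ℝ, IsOpen O ∧ U = O ∩ Set.Ico (-1:ℝ) 1)
    (hne : U.Nonempty) : ∃ n, Set.Ico (-1:ℝ) 1 ⊆ fA^[n] '' U := by
  obtain ⟨O, hOopen, rfl⟩ := hU
  by_cases hm : (-1:ℝ) ∈ O
  · obtain ⟨ε, hε, hball⟩ := Metric.isOpen_iff.mp hOopen (-1) hm
    set t := min (-1 + ε/2) (-1/2 : ℝ) with ht
    have ht1 : -1 < t := lt_min (by linarith) (by norm_num)
    have ht2 : t ≤ -1/2 := min_le_right _ _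
    have hsub : Set.Ico (-1:ℝ) t ⊆ fA^[0] '' (O ∩ Set.Ico (-1:ℝ) 1) := by
      simp only [Function.iterate_zero, Function.iterate_zero_apply, Set.image_id', Set.image_id]
      intro y hy
      have htle : t ≤ -1 + ε/2 := min_le_left _ _
      refine ⟨hball ?_, hy.1, by linarith [hy.2]⟩
      rw [Metric.mem_ball, Real.dist_eq, abs_sub_lt_iff]
      constructor
      · linarith [hy.2]
      · linarith [hy.1]
    exact fromS1A ht1 ht2 hsub
  · have hEq : O ∩ Set.Ico (-1:ℝ) 1 = O ∩ Set.Ioo (-1:ℝ) 1 := by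
      ext y
      constructor
      · rintro ⟨h1, h2, h3⟩
        refine ⟨h1, lt_of_le_of_ne h2 ?_, h3⟩
        intro hcon
        exact hm (hcon ▸ h1)
      · rintro ⟨h1, h2, h3⟩
        exact ⟨h1, le_of_lt h2, h3⟩
    rw [hEq]
    rw [hEq] at hne
    set U' := O ∩ Set.Ioo (-1:ℝ) 1 with hU'
    have hU'open : IsOpen U' := hOopen.inter isOpen_Ioo
    obtain ⟨u, huU⟩ := hne
    have hu1 : -1 < u := huU.2.1
    have hu2 : u < 1 := huU.2.2
    obtain ⟨ε, hε, hball⟩ := Metric.isOpen_iff.mp hU'open u huU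
    obtain ⟨q, hq1, hq2⟩ := exists_rat_btwn (show max (u - ε/2) (-1) < u from
      max_lt (by linarith) hu1)
    have hq1' : u - ε/2 < q := lt_of_le_of_lt (le_max_left _ _) hq1
    have hqm1 : -1 < (q:ℝ) := lt_of_le_of_lt (le_max_right _ _) hq1
    have hqU : (q:ℝ) ∈ U' := by
      apply hball
      rw [Metric.mem_ball, Real.dist_eq, abs_sub_lt_iff]
      constructor
      · linarith
      · linarith
    have hq1R : (q:ℝ) < 1 := hqU.2.2
    set a := q.num with ha
    set b := (q.den : ℤ) with hb
    have hbpos : 0 < b := by rw [hb]; exact_mod_cast q.pos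
    have hbR : (0:ℝ) < b := by exact_mod_cast hbpos
    have hcast : (q:ℝ) = (a:ℝ)/(b:ℝ) := by
      rw [Rat.cast_def, ha, hb]
      push_cast
      ring
    have hab1 : -b < a := by
      have : -(b:ℝ) < a := by
        rw [hcast, lt_div_iff₀ hbR] at hqm1
        linarith
      exact_mod_cast this
    have hab2 : a < b := by
      have : (a:ℝ) < b := by
        rw [hcast, div_lt_iff₀ hbR] at hq1R
        linarith
      exact_mod_cast this
    obtain ⟨N, hbd, hterm⟩ := ratA b.natAbs a b hbpos hab1 hab2 le_rfl
    have hbd' : ∀ k < N, fA^[k] (q:ℝ) ∈ Set.Ico (-1:ℝ) 1 \ BdA := by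
      intro k hk
      rw [hcast]
      exact hbd k hk
    have hterm' : fA^[N] (q:ℝ) ∈ BdA := by
      rw [hcast]
      exact hterm
    obtain ⟨c, d, hcq, hqd, hsub⟩ := iterOpen
      (fun x V hx hV hxV => openA hx hV hxV) N (q:ℝ) U' hU'open hqU hbd'
    have hpS : fA^[N] (q:ℝ) ∈ fA^[N] '' U' := ⟨q, hqU, rfl⟩
    have hImSub : fA^[N] '' U' ⊆ Set.Ico (-1:ℝ) 1 :=
      iter_mem (fun x hx => fA_mem hx)
        (fun y hy => ⟨le_of_lt hy.2.1, hy.2.2⟩) N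
    have hne1 : fA^[N] (q:ℝ) ≠ -1 := by
      intro hcon
      have hcm1 : c < -1 := hcon ▸ hcq
      have hmem : (c + -1)/2 ∈ Set.Ioo c d := by
        constructor
        · linarith
        · have : -1 < d := hcon ▸ hqd
          linarith
      have := (hImSub (hsub hmem)).1
      linarith
    exact funnelA hsub hpS hcq hqd hterm' hne1

lemma fullH {U : Set ℝ} (hU : ∃ O : Set ℝ, IsOpen O ∧ U = O ∩ Set.Ico (-1:ℝ) 1)
    (hne : U.Nonempty) : ∃ n, Set.Ico (-1:ℝ) 1 ⊆ fH^[n] '' U := by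
  obtain ⟨O, hOopen, rfl⟩ := hU
  by_cases hm : (-1:ℝ) ∈ O
  · obtain ⟨ε, hε, hball⟩ := Metric.isOpen_iff.mp hOopen (-1) hm
    set t := min (-1 + ε/2) (-1/3 : ℝ) with ht
    have ht1 : -1 < t := lt_min (by linarith) (by norm_num)
    have ht2 : t ≤ -1/3 := min_le_right _ _
    have hsub : Set.Ico (-1:ℝ) t ⊆ fH^[0] '' (O ∩ Set.Ico (-1:ℝ) 1) := by
      simp only [Function.iterate_zero, Function.iterate_zero_apply, Set.image_id', Set.image_id]
      intro y hy
      have htle : t ≤ -1 + ε/2 := min_le_left _ _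
      refine ⟨hball ?_, hy.1, by linarith [hy.2]⟩
      rw [Metric.mem_ball, Real.dist_eq, abs_sub_lt_iff]
      constructor
      · linarith [hy.2]
      · linarith [hy.1]
    exact fromS1H ht1 ht2 hsub
  · have hEq : O ∩ Set.Ico (-1:ℝ) 1 = O ∩ Set.Ioo (-1:ℝ) 1 := by
      ext y
      constructor
      · rintro ⟨h1, h2, h3⟩
        refine ⟨h1, lt_of_le_of_ne h2 ?_, h3⟩
        intro hcon
        exact hm (hcon ▸ h1)
      · rintro ⟨h1, h2, h3⟩
        exact ⟨h1, le_of_lt h2, h3⟩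
    rw [hEq]
    rw [hEq] at hne
    set U' := O ∩ Set.Ioo (-1:ℝ) 1 with hU'
    have hU'open : IsOpen U' := hOopen.inter isOpen_Ioo
    obtain ⟨u, huU⟩ := hne
    have hu1 : -1 < u := huU.2.1
    have hu2 : u < 1 := huU.2.2
    obtain ⟨ε, hε, hball⟩ := Metric.isOpen_iff.mp hU'open u huU
    obtain ⟨q, hq1, hq2⟩ := exists_rat_btwn (show max (u - ε/2) (-1) < u from
      max_lt (by linarith) hu1)
    have hq1' : u - ε/2 < q := lt_of_le_of_lt (le_max_left _ _) hq1
    have hqm1 : -1 < (q:ℝ) := lt_of_le_of_lt (le_max_right _ _) hq1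
    have hqU : (q:ℝ) ∈ U' := by
      apply hball
      rw [Metric.mem_ball, Real.dist_eq, abs_sub_lt_iff]
      constructor
      · linarith
      · linarith
    have hq1R : (q:ℝ) < 1 := hqU.2.2
    set a := q.num with ha
    set b := (q.den : ℤ) with hb
    have hbpos : 0 < b := by rw [hb]; exact_mod_cast q.pos
    have hbR : (0:ℝ) < b := by exact_mod_cast hbpos
    have hcast : (q:ℝ) = (a:ℝ)/(b:ℝ) := by
      rw [Rat.cast_def, ha, hb]
      push_cast
      ring
    have hab1 : -b < a := by
      have : -(b:ℝ) < a := by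
        rw [hcast, lt_div_iff₀ hbR] at hqm1
        linarith
      exact_mod_cast this
    have hab2 : a < b := by
      have : (a:ℝ) < b := by
        rw [hcast, div_lt_iff₀ hbR] at hq1R
        linarith
      exact_mod_cast this
    obtain ⟨N, hbd, hterm⟩ := ratH b.natAbs a b hbpos hab1 hab2 le_rfl
    have hbd' : ∀ k < N, fH^[k] (q:ℝ) ∈ Set.Ico (-1:ℝ) 1 \ BdH := by
      intro k hk
      rw [hcast]
      exact hbd k hk
    have hterm' : fH^[N] (q:ℝ) ∈ BdH := by
      rw [hcast]
      exact hterm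
    obtain ⟨c, d, hcq, hqd, hsub⟩ := iterOpen
      (fun x V hx hV hxV => openH hx hV hxV) N (q:ℝ) U' hU'open hqU hbd'
    have hpS : fH^[N] (q:ℝ) ∈ fH^[N] '' U' := ⟨q, hqU, rfl⟩
    have hImSub : fH^[N] '' U' ⊆ Set.Ico (-1:ℝ) 1 :=
      iter_mem (fun x hx => fH_mem hx)
        (fun y hy => ⟨le_of_lt hy.2.1, hy.2.2⟩) N
    have hne1 : fH^[N] (q:ℝ) ≠ -1 := by
      intro hcon
      have hcm1 : c < -1 := hcon ▸ hcq
      have hmem : (c + -1)/2 ∈ Set.Ioo c d := by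
        constructor
        · linarith
        · have : -1 < d := hcon ▸ hqd
          linarith
      have := (hImSub (hsub hmem)).1
      linarith
    exact funnelH hsub hpS hcq hqd hterm' hne1

end J


/-- Both the Artin map `f̃_A` and the Hurwitz map `f̃_H` are topologically transitive on
`[-1,1)`: for every pair of nonempty relatively open subsets `U, V` of `[-1,1)` there is an
`n ≥ 0` with `f̃ⁿ(U) ∩ V ≠ ∅`. -/
theorem artin_hurwitz_topologically_transitive :
    (∀ U V : Set ℝ,
      (∃ O : Set ℝ, IsOpen O ∧ U = O ∩ Set.Ico (-1 : ℝ) 1) →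
      (∃ O : Set ℝ, IsOpen O ∧ V = O ∩ Set.Ico (-1 : ℝ) 1) →
      U.Nonempty → V.Nonempty →
      ∃ n : ℕ, (fA^[n] '' U ∩ V).Nonempty) ∧
    (∀ U V : Set ℝ,
      (∃ O : Set ℝ, IsOpen O ∧ U = O ∩ Set.Ico (-1 : ℝ) 1) →
      (∃ O : Set ℝ, IsOpen O ∧ V = O ∩ Set.Ico (-1 : ℝ) 1) →
      U.Nonempty → V.Nonempty →
      ∃ n : ℕ, (fH^[n] '' U ∩ V).Nonempty) := by
  constructor
  · intro U V hU hV hUne hVne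
    obtain ⟨n, hn⟩ := fullA hU hUne
    obtain ⟨v, hv⟩ := hVne
    obtain ⟨OV, hOV, rfl⟩ := hV
    exact ⟨n, v, hn hv.2, hv⟩
  · intro U V hU hV hUne hVne
    obtain ⟨n, hn⟩ := fullH hU hUne
    obtain ⟨v, hv⟩ := hVne
    obtain ⟨OV, hOV, rfl⟩ := hV
    exact ⟨n, v, hn hv.2, hv⟩
end
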